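/- arXiv:1202.6180 — 14 statements merged into one kernel-verified Lean document; each statement's English description precedes it below -/
import Mathlib

section
/- Let X be a set and let P be a nonempty sublattice of 2^{P(X)}, equipped with the subspace topology inherited from the product topology on 2^{P(X)}. Then P is compact if and only if P is a complete sublattice of 2^{P(X)}, i.e., for every nonempty subset S of P, both ⋃S and ⋂S belong to P. -/
/-- The Cantor-cube topology on `Set (Set X)` (identifying `𝒫(𝒫(X))` with `2^{𝒫(X)}`):
the product topology, whose subbasic open sets are
`A⁺ = {x | A ∈ x}` and `A⁻ = {x | A ∉ x}` for `A ⊆ X`. -/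
def cantorTop (X : Type*) : TopologicalSpace (Set (Set X)) :=
  TopologicalSpace.generateFrom
    ({U | ∃ A : Set X, U = {x : Set (Set X) | A ∈ x}} ∪
     {U | ∃ A : Set X, U = {x : Set (Set X) | A ∉ x}})

open scoped Topology
open TopologicalSpace

section Aux
variable {X : Type*}

private lemma open_pos (A : Set X) : @IsOpen _ (cantorTop X) {x : Set (Set X) | A ∈ x} :=
  GenerateOpen.basic _ (Or.inl ⟨A, rfl⟩)

private lemma open_neg (A : Set X) : @IsOpen _ (cantorTop X) {x : Set (Set X) | A ∉ x} :=
  GenerateOpen.basic _ (Or.inr ⟨A, rfl⟩)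

private lemma cantor_nhds {U : Set (Set (Set X))} (hU : @IsOpen _ (cantorTop X) U)
    {x : Set (Set X)} (hx : x ∈ U) :
    ∃ F : Finset (Set X), ∀ y : Set (Set X), (∀ A ∈ F, (A ∈ y ↔ A ∈ x)) → y ∈ U := by
  classical
  letI := cantorTop X
  have hbasis := TopologicalSpace.isTopologicalBasis_of_subbasis
    (s := {U | ∃ A : Set X, U = {x : Set (Set X) | A ∈ x}} ∪
     {U | ∃ A : Set X, U = {x : Set (Set X) | A ∉ x}}) rfl
  obtain ⟨v, ⟨f, ⟨hfin, hsub⟩, rfl⟩, hxv, hvU⟩ := hbasis.exists_subset_of_mem_open hx hU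
  set Q : Set (Set (Set X)) → Set X → Prop :=
    fun u A => u = {x | A ∈ x} ∨ u = {x | A ∉ x} with hQdef
  have hQ : ∀ u ∈ f, ∃ A, Q u A := by
    intro u hu
    rcases hsub hu with ⟨A, hA⟩ | ⟨A, hA⟩
    exacts [⟨A, Or.inl hA⟩, ⟨A, Or.inr hA⟩]
  set g : Set (Set (Set X)) → Set X :=
    fun u => if h : ∃ A, Q u A then h.choose else ∅ with hgdef
  refine ⟨(hfin.image g).toFinset, fun y hy => hvU ?_⟩
  intro u hu
  have hex := hQ u hu
  have hgu : Q u (g u) := by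
    rw [hgdef]; simp only [dif_pos hex]; exact hex.choose_spec
  have hmem : g u ∈ (hfin.image g).toFinset := by
    rw [Set.Finite.mem_toFinset]; exact ⟨u, hu, rfl⟩
  have hag := hy _ hmem
  have hxu : x ∈ u := hxv u hu
  rcases hgu with h | h
  · rw [h] at hxu ⊢
    exact hag.2 hxu
  · rw [h] at hxu ⊢
    exact fun h' => hxu (hag.1 h')

private lemma cylinder_open (x : Set (Set X)) (F : Finset (Set X)) :
    @IsOpen _ (cantorTop X) {y : Set (Set X) | ∀ A ∈ F, (A ∈ y ↔ A ∈ x)} := by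
  letI := cantorTop X
  have heq : {y : Set (Set X) | ∀ A ∈ F, (A ∈ y ↔ A ∈ x)}
      = ⋂ A ∈ F, {y : Set (Set X) | A ∈ y ↔ A ∈ x} := by
    ext y; simp
  rw [heq]
  refine isOpen_biInter_finset fun A _ => ?_
  by_cases hA : A ∈ x
  · have : {y : Set (Set X) | A ∈ y ↔ A ∈ x} = {y | A ∈ y} := by ext y; simp [hA]
    rw [this]; exact open_pos A
  · have : {y : Set (Set X) | A ∈ y ↔ A ∈ x} = {y | A ∉ y} := by ext y; simp [hA]
    rw [this]; exact open_neg A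

private lemma closure_agree {P : Set (Set (Set X))} {x : Set (Set X)}
    (hx : x ∈ @closure _ (cantorTop X) P) (F : Finset (Set X)) :
    ∃ p ∈ P, ∀ A ∈ F, (A ∈ p ↔ A ∈ x) := by
  letI := cantorTop X
  obtain ⟨p, hp1, hp2⟩ := mem_closure_iff.1 hx _ (cylinder_open x F) (fun A _ => Iff.rfl)
  exact ⟨p, hp2, hp1⟩

private lemma cantor_t2 : @T2Space (Set (Set X)) (cantorTop X) := by
  letI := cantorTop X
  constructor
  intro x y hxy
  have hex : ∃ A : Set X, ¬ (A ∈ x ↔ A ∈ y) := by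
    by_contra h
    push_neg at h
    exact hxy (Set.ext fun A => h A)
  obtain ⟨A, hA⟩ := hex
  by_cases hAx : A ∈ x
  · have hAy : A ∉ y := fun h => hA ⟨fun _ => h, fun _ => hAx⟩
    exact ⟨{z | A ∈ z}, {z | A ∉ z}, open_pos A, open_neg A, hAx, hAy,
      Set.disjoint_left.2 fun z hz hz' => hz' hz⟩
  · have hAy : A ∈ y := by
      by_contra h
      exact hA ⟨fun h' => absurd h' hAx, fun h' => absurd h' h⟩
    exact ⟨{z | A ∉ z}, {z | A ∈ z}, open_neg A, open_pos A, hAx, hAy,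
      Set.disjoint_left.2 fun z hz hz' => hz hz'⟩

private lemma cantor_eq (X : Type*) :
    cantorTop X = @Pi.topologicalSpace (Set X) (fun _ => Prop) (fun _ => ⊥) := by
  apply le_antisymm
  · refine le_iInf fun A => ?_
    refine (continuous_iff_le_induced (t₁ := cantorTop X) (t₂ := (⊥ : TopologicalSpace Prop))
      (f := fun f : Set (Set X) => f A)).1 ?_
    letI := cantorTop X
    letI : TopologicalSpace Prop := ⊥
    refine continuous_def.2 fun U _ => ?_
    by_cases hT : True ∈ U <;> by_cases hF : False ∈ U
    · have : (fun f : Set (Set X) => f A) ⁻¹' U = Set.univ := by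
        ext x
        simp only [Set.mem_preimage, Set.mem_univ, iff_true]
        by_cases h : x A
        · rwa [eq_true h]
        · rwa [eq_false h]
      have h2 : IsOpen ((fun f : Set (Set X) => f A) ⁻¹' U) := by
        rw [this]; exact isOpen_univ
      exact h2
    · have : (fun f : Set (Set X) => f A) ⁻¹' U = {x : Set (Set X) | A ∈ x} := by
        ext x
        simp only [Set.mem_preimage, Set.mem_setOf_eq]
        constructor
        · intro h
          by_contra hc
          have hxA : x A = False := eq_false hc
          rw [hxA] at h
          exact hF h
        · intro h
          have : x A = True := eq_true h
          rw [this]; exact hT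
      have h2 : IsOpen ((fun f : Set (Set X) => f A) ⁻¹' U) := by
        rw [this]; exact open_pos A
      exact h2
    · have : (fun f : Set (Set X) => f A) ⁻¹' U = {x : Set (Set X) | A ∉ x} := by
        ext x
        simp only [Set.mem_preimage, Set.mem_setOf_eq]
        constructor
        · intro h hc
          have : x A = True := eq_true hc
          rw [this] at h
          exact hT h
        · intro h
          have : x A = False := eq_false h
          rw [this]; exact hF
      have h2 : IsOpen ((fun f : Set (Set X) => f A) ⁻¹' U) := by
        rw [this]; exact open_neg A
      exact h2
    · have : (fun f : Set (Set X) => f A) ⁻¹' U = ∅ := by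
        ext x
        simp only [Set.mem_preimage, Set.mem_empty_iff_false, iff_false]
        intro h
        by_cases hc : x A
        · rw [eq_true hc] at h; exact hT h
        · rw [eq_false hc] at h; exact hF h
      have h2 : IsOpen ((fun f : Set (Set X) => f A) ⁻¹' U) := by
        rw [this]; exact isOpen_empty
      exact h2
  · letI : TopologicalSpace Prop := ⊥
    haveI : DiscreteTopology Prop := ⟨rfl⟩
    refine le_generateFrom fun u hu => ?_
    rcases hu with ⟨A, rfl⟩ | ⟨A, rfl⟩
    · have : {x : Set (Set X) | A ∈ x} = (fun f : Set (Set X) => f A) ⁻¹' {p | p} := rfl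
      rw [this]
      exact (continuous_apply A).isOpen_preimage _ (isOpen_discrete _)
    · have : {x : Set (Set X) | A ∉ x} = (fun f : Set (Set X) => f A) ⁻¹' {p | ¬ p} := rfl
      rw [this]
      exact (continuous_apply A).isOpen_preimage _ (isOpen_discrete _)

end Aux

theorem stmt1 {X : Type*} (P : Set (Set (Set X))) (hP : P.Nonempty)
    (hlat : ∀ a ∈ P, ∀ b ∈ P, a ∪ b ∈ P ∧ a ∩ b ∈ P) :
    @IsCompact _ (cantorTop X) P ↔
      ∀ S ⊆ P, S.Nonempty → ⋃₀ S ∈ P ∧ ⋂₀ S ∈ P := by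
  classical
  letI := cantorTop X
  haveI : T2Space (Set (Set X)) := cantor_t2
  constructor
  · intro hcomp S hSP hS
    have hclosed : IsClosed P := hcomp.isClosed
    obtain ⟨s₀, hs₀⟩ := hS
    constructor
    · -- ⋃₀ S ∈ P
      have hcl : ⋃₀ S ∈ closure P := by
        rw [mem_closure_iff]
        intro U hU hxU
        obtain ⟨F, hF⟩ := cantor_nhds hU hxU
        have key : ∀ G : Finset (Set X),
            ∃ p ∈ P, p ⊆ ⋃₀ S ∧ ∀ A ∈ G, A ∈ ⋃₀ S → A ∈ p := by
          intro G
          induction G using Finset.induction_on with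
          | empty => exact ⟨s₀, hSP hs₀, Set.subset_sUnion_of_mem hs₀, by simp⟩
          | @insert a G ha ih =>
            obtain ⟨p, hpP, hps, hpG⟩ := ih
            by_cases haS : a ∈ ⋃₀ S
            · obtain ⟨s, hsS, has⟩ := haS
              refine ⟨p ∪ s, (hlat p hpP s (hSP hsS)).1,
                Set.union_subset hps (Set.subset_sUnion_of_mem hsS), ?_⟩
              intro A hAmem hAS
              rcases Finset.mem_insert.1 hAmem with rfl | h
              · exact Set.mem_union_right _ has
              · exact Set.mem_union_left _ (hpG A h hAS)
            · refine ⟨p, hpP, hps, ?_⟩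
              intro A hAmem hAS
              rcases Finset.mem_insert.1 hAmem with rfl | h
              · exact absurd hAS haS
              · exact hpG A h hAS
        obtain ⟨p, hpP, hps, hpF⟩ := key F
        exact ⟨p, hF p fun A hAF => ⟨fun h => hps h, fun h => hpF A hAF h⟩, hpP⟩
      rwa [hclosed.closure_eq] at hcl
    · -- ⋂₀ S ∈ P
      have hcl : ⋂₀ S ∈ closure P := by
        rw [mem_closure_iff]
        intro U hU hxU
        obtain ⟨F, hF⟩ := cantor_nhds hU hxU
        have key : ∀ G : Finset (Set X),
            ∃ p ∈ P, ⋂₀ S ⊆ p ∧ ∀ A ∈ G, A ∉ ⋂₀ S → A ∉ p := by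
          intro G
          induction G using Finset.induction_on with
          | empty => exact ⟨s₀, hSP hs₀, Set.sInter_subset_of_mem hs₀, by simp⟩
          | @insert a G ha ih =>
            obtain ⟨p, hpP, hps, hpG⟩ := ih
            by_cases haS : a ∈ ⋂₀ S
            · refine ⟨p, hpP, hps, ?_⟩
              intro A hAmem hAS
              rcases Finset.mem_insert.1 hAmem with rfl | h
              · exact absurd haS hAS
              · exact hpG A h hAS
            · obtain ⟨s, hsS, has⟩ : ∃ s ∈ S, a ∉ s := by
                by_contra hc
                push_neg at hc
                exact haS fun s hs => hc s hs
              refine ⟨p ∩ s, (hlat p hpP s (hSP hsS)).2,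
                Set.subset_inter hps (Set.sInter_subset_of_mem hsS), ?_⟩
              intro A hAmem hAS
              rcases Finset.mem_insert.1 hAmem with rfl | h
              · exact fun hmem => has hmem.2
              · exact fun hmem => hpG A h hAS hmem.1
        obtain ⟨p, hpP, hps, hpF⟩ := key F
        refine ⟨p, hF p fun A hAF => ?_, hpP⟩
        constructor
        · intro h
          by_contra hc
          exact hpF A hAF hc h
        · intro h
          exact hps h
      rwa [hclosed.closure_eq] at hcl
  · intro hcomplete
    haveI hCS : @CompactSpace (Set (Set X)) (cantorTop X) := by
      rw [cantor_eq]
      letI : TopologicalSpace Prop := ⊥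
      haveI : ∀ A : Set X, CompactSpace Prop := fun _ => Finite.compactSpace
      exact Pi.compactSpace
    have hclosed : IsClosed P := by
      rw [← closure_subset_iff_isClosed]
      intro x hx
      have H : ∀ F : Finset (Set X), ∃ p ∈ P, ∀ A ∈ F, (A ∈ p ↔ A ∈ x) :=
        closure_agree hx
      by_cases hne : ∃ A : Set X, A ∈ x
      · obtain ⟨A₀, hA₀⟩ := hne
        set S : Set (Set (Set X)) := {q | ∃ A ∈ x, q = ⋂₀ {p ∈ P | A ∈ p}} with hSdef
        have hq : ∀ A ∈ x, ⋂₀ {p ∈ P | A ∈ p} ∈ P ∧ A ∈ ⋂₀ {p ∈ P | A ∈ p} ∧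
            ⋂₀ {p ∈ P | A ∈ p} ⊆ x := by
          intro A hA
          have hne' : {p ∈ P | A ∈ p}.Nonempty := by
            obtain ⟨p, hpP, hp⟩ := H {A}
            exact ⟨p, hpP, (hp A (by simp)).2 hA⟩
          have hsubP : {p ∈ P | A ∈ p} ⊆ P := fun p hp => hp.1
          refine ⟨(hcomplete _ hsubP hne').2, fun p hp => hp.2, ?_⟩
          intro C hC
          by_contra hCx
          obtain ⟨p, hpP, hpiff⟩ := H {A, C}
          have hpA : A ∈ p := (hpiff A (by simp)).2 hA
          have hpC : C ∉ p := fun h => hCx ((hpiff C (by simp)).1 h)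
          exact hpC (hC p ⟨hpP, hpA⟩)
        have hSP : S ⊆ P := by
          rintro q ⟨A, hA, rfl⟩
          exact (hq A hA).1
        have hSne : S.Nonempty := ⟨_, A₀, hA₀, rfl⟩
        have hUeq : ⋃₀ S = x := by
          apply Set.Subset.antisymm
          · rintro C ⟨q, ⟨A, hA, rfl⟩, hC⟩
            exact (hq A hA).2.2 hC
          · intro A hA
            exact ⟨_, ⟨A, hA, rfl⟩, (hq A hA).2.1⟩
        rw [← hUeq]
        exact (hcomplete S hSP hSne).1
      · push_neg at hne
        have hIeq : ⋂₀ P = x := by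
          apply Set.Subset.antisymm
          · intro B hB
            exfalso
            obtain ⟨p, hpP, hpiff⟩ := H {B}
            have : B ∉ p := fun h => hne B ((hpiff B (by simp)).1 h)
            exact this (hB p hpP)
          · intro B hB
            exact absurd hB (hne B)
        rw [← hIeq]
        exact (hcomplete P Set.Subset.rfl hP).2
    exact hclosed.isCompact
end

section
/- Let X be a set and let P be a nonempty sublattice of 2^{P(X)}. For every x ∈ P, the sets {y ∈ P : x ⊆ y} and {y ∈ P : y ⊆ x} are closed in the subspace topology on P inherited from 2^{P(X)} (so the interval topology on P is coarser than the subspace topology). Moreover, if P is a complete sublattice of 2^{P(X)}, then the subspace topology on P coincides with the interval topology, i.e., with the topology whose closed sets are generated by the subbasis {{y ∈ P : x ⊆ y} : x ∈ P} ∪ {{y ∈ P : y ⊆ x} : x ∈ P} ∪ {P, ∅}. -/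
open scoped Topology

/-- The interval topology on a subset `P` of `2^{𝒫(X)}`: the topology whose closed sets
are generated by the subbasis of principal up-sets and down-sets of points of `P`
(together with `P` and `∅`); equivalently, the topology generated by the complements of
the principal up-sets and down-sets. -/
def intervalTop {X : Type*} (P : Set (Set (Set X))) : TopologicalSpace ↥P :=
  TopologicalSpace.generateFrom
    ({U | ∃ x : ↥P, U = {y : ↥P | ¬ (x : Set (Set X)) ⊆ (y : Set (Set X))}} ∪
     {U | ∃ x : ↥P, U = {y : ↥P | ¬ (y : Set (Set X)) ⊆ (x : Set (Set X))}})

open TopologicalSpace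

lemma cantor_plus_open {X : Type*} (A : Set X) :
    IsOpen[cantorTop X] {z : Set (Set X) | A ∈ z} :=
  TopologicalSpace.isOpen_generateFrom_of_mem (Or.inl ⟨A, rfl⟩)

lemma cantor_minus_open {X : Type*} (A : Set X) :
    IsOpen[cantorTop X] {z : Set (Set X) | A ∉ z} :=
  TopologicalSpace.isOpen_generateFrom_of_mem (Or.inr ⟨A, rfl⟩)

lemma cantor_up_closed {X : Type*} (x : Set (Set X)) :
    IsClosed[cantorTop X] {z : Set (Set X) | x ⊆ z} := by
  letI := cantorTop X
  have h : {z : Set (Set X) | x ⊆ z} = ⋂ A ∈ x, {z : Set (Set X) | A ∈ z} := by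
    ext z; simp [Set.subset_def]
  rw [h]
  refine isClosed_biInter fun A _ => ?_
  rw [← isOpen_compl_iff]
  have : {z : Set (Set X) | A ∈ z}ᶜ = {z : Set (Set X) | A ∉ z} := rfl
  rw [this]
  exact cantor_minus_open A

lemma cantor_down_closed {X : Type*} (x : Set (Set X)) :
    IsClosed[cantorTop X] {z : Set (Set X) | z ⊆ x} := by
  letI := cantorTop X
  have h : {z : Set (Set X) | z ⊆ x} = ⋂ A ∈ xᶜ, {z : Set (Set X) | A ∉ z} := by
    ext z
    simp only [Set.mem_setOf_eq, Set.mem_iInter, Set.mem_compl_iff]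
    constructor
    · intro hz A hA hAz; exact hA (hz hAz)
    · intro h A hA; by_contra hAx; exact h A hAx hA
  rw [h]
  refine isClosed_biInter fun A _ => ?_
  rw [← isOpen_compl_iff]
  have : {z : Set (Set X) | A ∉ z}ᶜ = {z : Set (Set X) | A ∈ z} := by
    ext z; simp
  rw [this]
  exact cantor_plus_open A

theorem stmt2 {X : Type*} (P : Set (Set (Set X))) (hP : P.Nonempty)
    (hlat : ∀ a ∈ P, ∀ b ∈ P, a ∪ b ∈ P ∧ a ∩ b ∈ P) :
    (∀ x ∈ P,
      @IsClosed ↥P (TopologicalSpace.induced Subtype.val (cantorTop X))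
        {y : ↥P | x ⊆ (y : Set (Set X))} ∧
      @IsClosed ↥P (TopologicalSpace.induced Subtype.val (cantorTop X))
        {y : ↥P | (y : Set (Set X)) ⊆ x}) ∧
    ((∀ S ⊆ P, S.Nonempty → ⋃₀ S ∈ P ∧ ⋂₀ S ∈ P) →
      TopologicalSpace.induced Subtype.val (cantorTop X) = intervalTop P) := by
  classical
  letI tc := cantorTop X
  letI ti := TopologicalSpace.induced (Subtype.val : ↥P → Set (Set X)) (cantorTop X)
  have hcont : Continuous[ti, tc] (Subtype.val : ↥P → Set (Set X)) :=
    continuous_induced_dom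
  have hup : ∀ x : Set (Set X),
      @IsClosed ↥P ti {y : ↥P | x ⊆ (y : Set (Set X))} := by
    intro x
    have : {y : ↥P | x ⊆ (y : Set (Set X))} =
        Subtype.val ⁻¹' {z : Set (Set X) | x ⊆ z} := rfl
    rw [this]
    exact (cantor_up_closed x).preimage hcont
  have hdown : ∀ x : Set (Set X),
      @IsClosed ↥P ti {y : ↥P | (y : Set (Set X)) ⊆ x} := by
    intro x
    have : {y : ↥P | (y : Set (Set X)) ⊆ x} =
        Subtype.val ⁻¹' {z : Set (Set X) | z ⊆ x} := rfl
    rw [this]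
    exact (cantor_down_closed x).preimage hcont
  refine ⟨fun x _ => ⟨hup x, hdown x⟩, ?_⟩
  intro hcomp
  apply le_antisymm
  · -- induced ≤ intervalTop : every intervalTop-open is induced-open
    apply le_generateFrom
    rintro U (⟨x, rfl⟩ | ⟨x, rfl⟩)
    · have : {y : ↥P | ¬ (x : Set (Set X)) ⊆ (y : Set (Set X))} =
          {y : ↥P | (x : Set (Set X)) ⊆ (y : Set (Set X))}ᶜ := rfl
      rw [this]
      exact (hup x).isOpen_compl
    · have : {y : ↥P | ¬ (y : Set (Set X)) ⊆ (x : Set (Set X))} =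
          {y : ↥P | (y : Set (Set X)) ⊆ (x : Set (Set X))}ᶜ := rfl
      rw [this]
      exact (hdown x).isOpen_compl
  · -- intervalTop ≤ induced : every induced-open is intervalTop-open
    show intervalTop P ≤ ti
    have hind : ti = TopologicalSpace.generateFrom
        ((Set.preimage (Subtype.val : ↥P → Set (Set X))) ''
          ({U | ∃ A : Set X, U = {x : Set (Set X) | A ∈ x}} ∪
           {U | ∃ A : Set X, U = {x : Set (Set X) | A ∉ x}})) :=
      induced_generateFrom_eq
    rw [hind]
    apply le_generateFrom
    rintro U ⟨V, (⟨A, rfl⟩ | ⟨A, rfl⟩), rfl⟩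
    · -- preimage of A⁺ : {y | A ∈ y.val}
      by_cases hS : ({z ∈ P | A ∉ z}).Nonempty
      · obtain ⟨hM, -⟩ := hcomp {z ∈ P | A ∉ z} (fun z hz => hz.1) hS
        set M : ↥P := ⟨⋃₀ {z ∈ P | A ∉ z}, hM⟩
        have hAM : A ∉ (M : Set (Set X)) := by
          rintro ⟨z, hz, hAz⟩; exact hz.2 hAz
        have key : Subtype.val ⁻¹' {z : Set (Set X) | A ∈ z} =
            {y : ↥P | ¬ (y : Set (Set X)) ⊆ (M : Set (Set X))} := by
          ext y
          simp only [Set.mem_preimage, Set.mem_setOf_eq]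
          constructor
          · intro hAy hsub; exact hAM (hsub hAy)
          · intro hns
            by_contra hAy
            exact hns (Set.subset_sUnion_of_mem ⟨y.2, hAy⟩)
        rw [key]
        exact TopologicalSpace.isOpen_generateFrom_of_mem (Or.inr ⟨M, rfl⟩)
      · have key : Subtype.val ⁻¹' {z : Set (Set X) | A ∈ z} = (Set.univ : Set ↥P) := by
          ext y
          simp only [Set.mem_preimage, Set.mem_setOf_eq, Set.mem_univ, iff_true]
          by_contra hAy
          exact hS ⟨y, y.2, hAy⟩
        rw [key]
        exact (intervalTop P).isOpen_univ
    · -- preimage of A⁻ : {y | A ∉ y.val}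
      by_cases hS : ({z ∈ P | A ∈ z}).Nonempty
      · obtain ⟨-, hm⟩ := hcomp {z ∈ P | A ∈ z} (fun z hz => hz.1) hS
        set m : ↥P := ⟨⋂₀ {z ∈ P | A ∈ z}, hm⟩
        have hAm : A ∈ (m : Set (Set X)) := fun z hz => hz.2
        have key : Subtype.val ⁻¹' {z : Set (Set X) | A ∉ z} =
            {y : ↥P | ¬ (m : Set (Set X)) ⊆ (y : Set (Set X))} := by
          ext y
          simp only [Set.mem_preimage, Set.mem_setOf_eq]
          constructor
          · intro hAy hsub; exact hAy (hsub hAm)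
          · intro hns hAy
            exact hns (Set.sInter_subset_of_mem ⟨y.2, hAy⟩)
        rw [key]
        exact TopologicalSpace.isOpen_generateFrom_of_mem (Or.inl ⟨m, rfl⟩)
      · have key : Subtype.val ⁻¹' {z : Set (Set X) | A ∉ z} = (Set.univ : Set ↥P) := by
          ext y
          simp only [Set.mem_preimage, Set.mem_setOf_eq, Set.mem_univ, iff_true]
          intro hAy
          exact hS ⟨y, y.2, hAy⟩
        rw [key]
        exact (intervalTop P).isOpen_univ
  done
end

section
/- Let X be a set, let P be an infinite sublattice of 2^{P(X)}, and let x ∈ 2^{P(X)} be a limit point of P (every neighbourhood of x meets P ∖ {x}). Then there is a nonempty family (S_j)_{j∈J} of infinite subsets of P ∖ {x} such that x = ⋂_{j∈J} ⋃S_j, where ⋃S_j denotes the union of the members of S_j. -/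
open scoped Topology

theorem stmt3 {X : Type*} (P : Set (Set (Set X)))
    (hlat : ∀ a ∈ P, ∀ b ∈ P, a ∪ b ∈ P ∧ a ∩ b ∈ P)
    (hinf : P.Infinite) (x : Set (Set X))
    (hx : ∀ U : Set (Set (Set X)), IsOpen[cantorTop X] U → x ∈ U →
      ∃ y ∈ P, y ∈ U ∧ y ≠ x) :
    ∃ 𝒮 : Set (Set (Set (Set X))), 𝒮.Nonempty ∧
      (∀ S ∈ 𝒮, S ⊆ P \ {x} ∧ S.Infinite) ∧
      x = ⋂ S ∈ 𝒮, ⋃₀ S := by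
  classical
  letI : TopologicalSpace (Set (Set X)) := cantorTop X
  have hop_pos : ∀ A : Set X, IsOpen {z : Set (Set X) | A ∈ z} := fun A =>
    TopologicalSpace.GenerateOpen.basic _ (Or.inl ⟨A, rfl⟩)
  have hop_neg : ∀ A : Set X, IsOpen {z : Set (Set X) | A ∉ z} := fun A =>
    TopologicalSpace.GenerateOpen.basic _ (Or.inr ⟨A, rfl⟩)
  -- T1 separation (trivialized at y = x)
  have hsep : ∀ y : Set (Set X),
      ∃ W : Set (Set (Set X)), IsOpen W ∧ x ∈ W ∧ (y ≠ x → y ∉ W) := by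
    intro y
    by_cases hy : y = x
    · exact ⟨Set.univ, isOpen_univ, trivial, fun h => absurd hy h⟩
    obtain ⟨A, hA⟩ := not_forall.mp (fun h => hy (Set.ext h))
    by_cases hAx : A ∈ x
    · exact ⟨{z | A ∈ z}, hop_pos A, hAx, fun _ hAy => hA ⟨fun _ => hAx, fun _ => hAy⟩⟩
    · have hAy : A ∈ y := by
        by_contra hAy
        exact hA ⟨fun h => absurd h hAy, fun h => absurd h hAx⟩
      exact ⟨{z | A ∉ z}, hop_neg A, hAx, fun _ h => h hAy⟩
  choose W hWo hxW hyW using hsep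
  -- every open neighbourhood of x meets P\{x} in an infinite set
  have key : ∀ U : Set (Set (Set X)), IsOpen U → x ∈ U → ((P \ {x}) ∩ U).Infinite := by
    intro U hUo hxU
    by_contra hfin
    rw [Set.not_infinite] at hfin
    set F : Set (Set (Set X)) := (P \ {x}) ∩ U with hF
    have hVo : IsOpen (U ∩ ⋂ y ∈ F, W y) :=
      hUo.inter (hfin.isOpen_biInter fun y _ => hWo y)
    have hxV : x ∈ U ∩ ⋂ y ∈ F, W y :=
      ⟨hxU, Set.mem_iInter₂.mpr fun y _ => hxW y⟩
    obtain ⟨z, hzP, hzV, hzx⟩ := hx _ hVo hxV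
    have hzF : z ∈ F := ⟨⟨hzP, hzx⟩, hzV.1⟩
    exact hyW z hzx (Set.mem_iInter₂.mp hzV.2 z hzF)
  by_cases hex : ∃ A : Set X, A ∉ x
  · -- general case: use S_A = (P\{x}) ∩ {y | A ∉ y} for A ∉ x
    obtain ⟨A₀, hA₀⟩ := hex
    refine ⟨{S | ∃ A : Set X, A ∉ x ∧ S = (P \ {x}) ∩ {y | A ∉ y}}, ⟨_, A₀, hA₀, rfl⟩, ?_, ?_⟩
    · rintro S ⟨A, hAx, rfl⟩
      exact ⟨Set.inter_subset_left, key _ (hop_neg A) hAx⟩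
    · ext B
      simp only [Set.mem_iInter, Set.mem_setOf_eq]
      constructor
      · rintro hB S ⟨A, hAx, rfl⟩
        obtain ⟨y, hyP, hyU, hyx⟩ := hx ({z | A ∉ z} ∩ {z | B ∈ z})
          ((hop_neg A).inter (hop_pos B)) ⟨hAx, hB⟩
        exact ⟨y, ⟨⟨hyP, hyx⟩, hyU.1⟩, hyU.2⟩
      · intro h
        by_contra hB
        obtain ⟨y, hy, hBy⟩ := h _ ⟨B, hB, rfl⟩
        exact hy.2 hBy
  · -- x = univ: use the single set P \ {x}
    push_neg at hex
    refine ⟨{P \ {x}}, ⟨_, rfl⟩, ?_, ?_⟩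
    · rintro S rfl
      exact ⟨le_refl _, hinf.diff (Set.finite_singleton x)⟩
    · ext B
      simp only [Set.mem_iInter, Set.mem_singleton_iff]
      constructor
      · rintro hB S rfl
        obtain ⟨y, hyP, hyU, hyx⟩ := hx {z | B ∈ z} (hop_pos B) hB
        exact ⟨y, ⟨hyP, hyx⟩, hyU⟩
      · intro _
        exact hex B
end

section
/- Let X be a set and let P be a nonempty sublattice of 2^{P(X)}. Then the topological closure of P in 2^{P(X)} is a complete sublattice of 2^{P(X)}, and it equals the intersection of all complete sublattices of 2^{P(X)} containing P; in other words, the topological closure of P coincides with the lattice-theoretic completion of P inside 2^{P(X)}. -/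
open scoped Topology

/-- A complete sublattice of `2^{𝒫(X)}`: a nonempty family closed under pairwise unions
and intersections and, for every nonempty subfamily, under its union and intersection. -/
def IsCompleteSublattice {X : Type*} (P : Set (Set (Set X))) : Prop :=
  P.Nonempty ∧ (∀ a ∈ P, ∀ b ∈ P, a ∪ b ∈ P ∧ a ∩ b ∈ P) ∧
    ∀ S ⊆ P, S.Nonempty → ⋃₀ S ∈ P ∧ ⋂₀ S ∈ P

lemma mem_closure_cantor {X : Type*} {P : Set (Set (Set X))} {x : Set (Set X)} :
    x ∈ @closure _ (cantorTop X) P ↔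
    ∀ F G : Set (Set X), F.Finite → G.Finite → F ⊆ x → (∀ B ∈ G, B ∉ x) →
      ∃ p ∈ P, F ⊆ p ∧ ∀ B ∈ G, B ∉ p := by
  letI := cantorTop X
  constructor
  · intro hx F G hF hG hFx hGx
    have hopen : IsOpen {y : Set (Set X) | F ⊆ y ∧ ∀ B ∈ G, B ∉ y} := by
      have heq : {y : Set (Set X) | F ⊆ y ∧ ∀ B ∈ G, B ∉ y}
          = (⋂ A ∈ F, {y : Set (Set X) | A ∈ y}) ∩ (⋂ B ∈ G, {y : Set (Set X) | B ∉ y}) := by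
        ext y; simp [Set.subset_def]
      rw [heq]
      exact (hF.isOpen_biInter fun A _ =>
          TopologicalSpace.isOpen_generateFrom_of_mem (Or.inl ⟨A, rfl⟩)).inter
        (hG.isOpen_biInter fun B _ =>
          TopologicalSpace.isOpen_generateFrom_of_mem (Or.inr ⟨B, rfl⟩))
    obtain ⟨p, hp1, hp2⟩ := mem_closure_iff.mp hx _ hopen ⟨hFx, hGx⟩
    exact ⟨p, hp2, hp1.1, hp1.2⟩
  · intro h
    have hbasis := TopologicalSpace.isTopologicalBasis_of_subbasis
      (rfl : cantorTop X = TopologicalSpace.generateFrom _)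
    rw [hbasis.mem_closure_iff]
    rintro o ⟨f, ⟨hfin, hsub⟩, rfl⟩ hxo
    set F : Set (Set X) := {A | {y : Set (Set X) | A ∈ y} ∈ f} with hFdef
    set G : Set (Set X) := {A | {y : Set (Set X) | A ∉ y} ∈ f} with hGdef
    have hFfin : F.Finite := by
      have : F = (fun A : Set X => {y : Set (Set X) | A ∈ y}) ⁻¹' f := rfl
      rw [this]
      apply hfin.preimage
      intro A _ A' _ hAA'
      have h1 : A ∈ ({A'} : Set (Set X)) := (Set.ext_iff.mp hAA' {A'}).mpr rfl
      simpa using h1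
    have hGfin : G.Finite := by
      have : G = (fun A : Set X => {y : Set (Set X) | A ∉ y}) ⁻¹' f := rfl
      rw [this]
      apply hfin.preimage
      intro A _ A' _ hAA'
      by_contra hne
      exact (Set.ext_iff.mp hAA' {A'}).mp (by simpa using hne) rfl
    have hFx : F ⊆ x := fun A hA => hxo _ hA
    have hGx : ∀ B ∈ G, B ∉ x := fun B hB => hxo _ hB
    obtain ⟨p, hpP, hpF, hpG⟩ := h F G hFfin hGfin hFx hGx
    refine ⟨p, ?_, hpP⟩
    intro U hU
    rcases hsub hU with ⟨A, rfl⟩ | ⟨A, rfl⟩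
    · exact hpF hU
    · exact hpG A hU

lemma finite_lattice_mem {X : Type*} {P : Set (Set (Set X))}
    (hlat : ∀ a ∈ P, ∀ b ∈ P, a ∪ b ∈ P ∧ a ∩ b ∈ P) :
    ∀ S : Set (Set (Set X)), S.Finite → S ⊆ P → S.Nonempty → ⋃₀ S ∈ P ∧ ⋂₀ S ∈ P := by
  intro S hS
  refine Set.Finite.induction_on
    (motive := fun S _ => S ⊆ P → S.Nonempty → ⋃₀ S ∈ P ∧ ⋂₀ S ∈ P) S hS (fun _ h => absurd rfl h.ne_empty)
    (fun {a S'} ha hS' ih hsub _ => ?_)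
  have haP : a ∈ P := hsub (Set.mem_insert _ _)
  rcases S'.eq_empty_or_nonempty with rfl | hSne
  · refine ⟨?_, ?_⟩ <;> simpa using haP
  · obtain ⟨hU, hI⟩ := ih (fun s hs => hsub (Set.mem_insert_of_mem _ hs)) hSne
    rw [Set.sUnion_insert, Set.sInter_insert]
    exact ⟨(hlat a haP _ hU).1, (hlat a haP _ hI).2⟩

theorem stmt4 {X : Type*} (P : Set (Set (Set X))) (hP : P.Nonempty)
    (hlat : ∀ a ∈ P, ∀ b ∈ P, a ∪ b ∈ P ∧ a ∩ b ∈ P) :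
    IsCompleteSublattice (@closure _ (cantorTop X) P) ∧
    @closure _ (cantorTop X) P = ⋂₀ {L | P ⊆ L ∧ IsCompleteSublattice L} := by
  set C := @closure _ (cantorTop X) P with hC
  have hsub : P ⊆ C := fun p hp =>
    mem_closure_cantor.mpr fun F G _ _ hF hG => ⟨p, hp, hF, hG⟩
  have hmem : ∀ x ∈ C, ∀ F G : Set (Set X), F.Finite → G.Finite → F ⊆ x →
      (∀ B ∈ G, B ∉ x) → ∃ p ∈ P, F ⊆ p ∧ ∀ B ∈ G, B ∉ p :=
    fun x hx => mem_closure_cantor.mp hx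
  have hbin : ∀ a ∈ C, ∀ b ∈ C, a ∪ b ∈ C ∧ a ∩ b ∈ C := by
    intro a ha b hb
    constructor
    · apply mem_closure_cantor.mpr
      intro F G hFf hGf hFx hGx
      obtain ⟨p, hpP, hpF, hpG⟩ := hmem a ha (F ∩ a) G (hFf.inter_of_left _) hGf
        Set.inter_subset_right (fun B hB hBa => hGx B hB (Or.inl hBa))
      obtain ⟨q, hqP, hqF, hqG⟩ := hmem b hb (F \ a) G (hFf.subset Set.diff_subset) hGf
        (fun A hA => (hFx hA.1).resolve_left hA.2) (fun B hB hBb => hGx B hB (Or.inr hBb))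
      refine ⟨p ∪ q, (hlat p hpP q hqP).1, ?_, ?_⟩
      · intro A hA
        by_cases hAa : A ∈ a
        · exact Or.inl (hpF ⟨hA, hAa⟩)
        · exact Or.inr (hqF ⟨hA, hAa⟩)
      · rintro B hB (h | h)
        · exact hpG B hB h
        · exact hqG B hB h
    · apply mem_closure_cantor.mpr
      intro F G hFf hGf hFx hGx
      obtain ⟨p, hpP, hpF, hpG⟩ := hmem a ha F (G \ a) hFf (hGf.subset Set.diff_subset)
        (fun A hA => (hFx hA).1) (fun B hB => hB.2)
      obtain ⟨q, hqP, hqF, hqG⟩ := hmem b hb F (G ∩ a) hFf (hGf.inter_of_left _)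
        (fun A hA => (hFx hA).2) (fun B hB hBb => hGx B hB.1 ⟨hB.2, hBb⟩)
      refine ⟨p ∩ q, (hlat p hpP q hqP).2, fun A hA => ⟨hpF hA, hqF hA⟩, ?_⟩
      intro B hB hBpq
      by_cases hBa : B ∈ a
      · exact hqG B ⟨hB, hBa⟩ hBpq.2
      · exact hpG B ⟨hB, hBa⟩ hBpq.1
  have hcomp : ∀ S ⊆ C, S.Nonempty → ⋃₀ S ∈ C ∧ ⋂₀ S ∈ C := by
    intro S hS hSne
    obtain ⟨s0, hs0⟩ := hSne
    constructor
    · apply mem_closure_cantor.mpr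
      intro F G hFf hGf hFx hGx
      have hGs : ∀ s ∈ S, ∀ B ∈ G, B ∉ s := fun s hs B hB hBs => hGx B hB ⟨s, hs, hBs⟩
      rcases F.eq_empty_or_nonempty with rfl | hFne
      · obtain ⟨p, hpP, _, hpG⟩ := hmem s0 (hS hs0) ∅ G Set.finite_empty hGf
          (Set.empty_subset _) (hGs s0 hs0)
        exact ⟨p, hpP, Set.empty_subset _, hpG⟩
      · have key : ∀ f ∈ F, ∃ p ∈ P, f ∈ p ∧ ∀ B ∈ G, B ∉ p := by
          intro f hf
          obtain ⟨s, hsS, hfs⟩ := hFx hf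
          obtain ⟨p, hpP, hpF, hpG⟩ := hmem s (hS hsS) {f} G (Set.finite_singleton f) hGf
            (by simpa using hfs) (hGs s hsS)
          exact ⟨p, hpP, hpF rfl, hpG⟩
        choose! g hg1 hg2 hg3 using key
        obtain ⟨hU, -⟩ := finite_lattice_mem hlat (g '' F) (hFf.image g)
          (by rintro _ ⟨f, hf, rfl⟩; exact hg1 f hf) (hFne.image g)
        refine ⟨⋃₀ (g '' F), hU, ?_, ?_⟩
        · intro f hf
          exact ⟨g f, ⟨f, hf, rfl⟩, hg2 f hf⟩
        · rintro B hB ⟨_, ⟨f, hf, rfl⟩, hBp⟩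
          exact hg3 f hf B hB hBp
    · apply mem_closure_cantor.mpr
      intro F G hFf hGf hFx hGx
      have hFs : ∀ s ∈ S, F ⊆ s := fun s hs A hA => hFx hA s hs
      rcases G.eq_empty_or_nonempty with rfl | hGne
      · obtain ⟨p, hpP, hpF, -⟩ := hmem s0 (hS hs0) F ∅ hFf Set.finite_empty
          (hFs s0 hs0) (by simp)
        exact ⟨p, hpP, hpF, by simp⟩
      · have key : ∀ B ∈ G, ∃ p ∈ P, F ⊆ p ∧ B ∉ p := by
          intro B hB
          have : ¬ ∀ s ∈ S, B ∈ s := fun h => hGx B hB fun s hs => h s hs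
          push_neg at this
          obtain ⟨s, hsS, hBs⟩ := this
          obtain ⟨p, hpP, hpF, hpG⟩ := hmem s (hS hsS) F {B} hFf (Set.finite_singleton B)
            (hFs s hsS) (by simpa using hBs)
          exact ⟨p, hpP, hpF, hpG B rfl⟩
        choose! g hg1 hg2 hg3 using key
        obtain ⟨-, hI⟩ := finite_lattice_mem hlat (g '' G) (hGf.image g)
          (by rintro _ ⟨B, hB, rfl⟩; exact hg1 B hB) (hGne.image g)
        refine ⟨⋂₀ (g '' G), hI, ?_, ?_⟩
        · rintro A hA _ ⟨B, hB, rfl⟩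
          exact hg2 B hB hA
        · intro B hB hBI
          exact hg3 B hB (hBI (g B) ⟨B, hB, rfl⟩)
  have hcs : IsCompleteSublattice C := ⟨hP.mono hsub, hbin, hcomp⟩
  refine ⟨hcs, le_antisymm ?_ (Set.sInter_subset_of_mem ⟨hsub, hcs⟩)⟩
  intro x hx
  have hx' := mem_closure_cantor.mp hx
  intro L hL
  obtain ⟨hPL, -, -, hLcomp⟩ := hL
  rcases x.eq_empty_or_nonempty with rfl | hxne
  · -- show ∅ ∈ L via intersection of ⋃₀ {p ∈ P | B ∉ p} over all B
    set R : Set X → Set (Set X) := fun B => ⋃₀ {p | p ∈ P ∧ B ∉ p} with hRdef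
    have hR : ∀ B, R B ∈ L ∧ B ∉ R B := by
      intro B
      obtain ⟨p, hpP, -, hpG⟩ := hx' ∅ {B} Set.finite_empty (Set.finite_singleton B)
        (Set.empty_subset _) (by simp)
      refine ⟨(hLcomp {p | p ∈ P ∧ B ∉ p} (fun q hq => hPL hq.1) ⟨p, hpP, hpG B rfl⟩).1, ?_⟩
      rintro ⟨q, ⟨-, hBq⟩, hBq'⟩
      exact hBq hBq'
    have hmemL : ⋂₀ (Set.range R) ∈ L :=
      (hLcomp (Set.range R) (by rintro _ ⟨B, rfl⟩; exact (hR B).1) ⟨R ∅, ⟨∅, rfl⟩⟩).2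
    have heq : ⋂₀ (Set.range R) = (∅ : Set (Set X)) := by
      ext B
      simp only [Set.mem_empty_iff_false, iff_false]
      intro hB
      exact (hR B).2 (hB (R B) ⟨B, rfl⟩)
    rwa [heq] at hmemL
  · set Q : Set X → Set (Set X) := fun A => ⋂₀ {p | p ∈ P ∧ A ∈ p} with hQdef
    have hQ : ∀ A ∈ x, Q A ∈ L ∧ A ∈ Q A ∧ Q A ⊆ x := by
      intro A hA
      have hne : {p | p ∈ P ∧ A ∈ p}.Nonempty := by
        obtain ⟨p, hpP, hpF, -⟩ := hx' {A} ∅ (Set.finite_singleton A) Set.finite_empty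
          (by simpa using hA) (by simp)
        exact ⟨p, hpP, hpF rfl⟩
      refine ⟨(hLcomp _ (fun q hq => hPL hq.1) hne).2, fun p hp => hp.2, ?_⟩
      intro B hB
      by_contra hBx
      obtain ⟨p, hpP, hpF, hpG⟩ := hx' {A} {B} (Set.finite_singleton A)
        (Set.finite_singleton B) (by simpa using hA) (by simpa using hBx)
      exact hpG B rfl (hB p ⟨hpP, hpF rfl⟩)
    have hT : (Q '' x) ⊆ L := by
      rintro _ ⟨A, hA, rfl⟩
      exact (hQ A hA).1
    have hUL := (hLcomp (Q '' x) hT (hxne.image Q)).1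
    have hxeq : x = ⋃₀ (Q '' x) := by
      apply Set.Subset.antisymm
      · intro A hA
        exact ⟨Q A, ⟨A, hA, rfl⟩, (hQ A hA).2.1⟩
      · rintro B ⟨-, ⟨A, hA, rfl⟩, hB⟩
        exact (hQ A hA).2.2 hB
    rw [hxeq]
    exact hUL
end

section
/- Let X be a set, let α be an ordinal equipped with its order topology, and let (a_β)_{β<α} be a strictly increasing family in 2^{P(X)} (i.e., β < γ implies a_β ⊊ a_γ), with Ω = {a_β : β < α} carrying the subspace topology from 2^{P(X)}. Then the order isomorphism h : α → Ω, h(β) = a_β, is a homeomorphism if and only if for every limit ordinal β < α one has a_β = ⋃_{γ<β} a_γ. -/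
open scoped Topology

theorem stmt5 {X : Type*} (α : Ordinal)
    (a : ↥(Set.Iio α) → Set (Set X))
    (hmono : ∀ β γ : ↥(Set.Iio α), (β : Ordinal) < (γ : Ordinal) → a β ⊂ a γ) :
    @IsHomeomorph ↥(Set.Iio α) ↥(Set.range a)
        (Preorder.topology ↥(Set.Iio α))
        (TopologicalSpace.induced Subtype.val (cantorTop X))
        (fun β => ⟨a β, Set.mem_range_self β⟩) ↔
      ∀ β : ↥(Set.Iio α), Order.IsSuccLimit (β : Ordinal) →
        a β = ⋃ γ : ↥(Set.Iio α), ⋃ (_ : (γ : Ordinal) < (β : Ordinal)), a γ := by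
  letI : TopologicalSpace (Set (Set X)) := cantorTop X
  letI tS : TopologicalSpace ↥(Set.Iio α) := Preorder.topology ↥(Set.Iio α)
  haveI hOT : OrderTopology ↥(Set.Iio α) := ⟨rfl⟩
  set h : ↥(Set.Iio α) → ↥(Set.range a) := fun β => ⟨a β, Set.mem_range_self β⟩ with hh
  -- basic monotonicity facts
  have hsub : ∀ {β γ : ↥(Set.Iio α)}, β ≤ γ → a β ⊆ a γ := by
    intro β γ hle
    rcases eq_or_lt_of_le hle with rfl | hlt
    · exact subset_rfl
    · exact (hmono _ _ hlt).subset
  have hinj : Function.Injective a := by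
    intro β γ hbg
    rcases lt_trichotomy β γ with hlt | heq | hlt
    · exact absurd hbg (hmono _ _ hlt).ne
    · exact heq
    · exact absurd hbg.symm (hmono _ _ hlt).ne
  have hbij : Function.Bijective h := by
    constructor
    · intro β γ hbg
      exact hinj (congrArg Subtype.val hbg)
    · rintro ⟨y, β, rfl⟩
      exact ⟨β, rfl⟩
  -- least element characterization for the sets {β | A ∈ a β}
  have minP : ∀ A : Set X, (∃ β : ↥(Set.Iio α), A ∈ a β) →
      ∃ β₀ : ↥(Set.Iio α), ∀ x : ↥(Set.Iio α), A ∈ a x ↔ β₀ ≤ x := by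
    intro A hne
    obtain ⟨β₀, hβ₀, hmin⟩ := (wellFounded_lt (α := ↥(Set.Iio α))).has_min {β : ↥(Set.Iio α) | A ∈ a β} hne
    refine ⟨β₀, fun x => ⟨fun hx => not_lt.1 (hmin x hx), fun hx => hsub hx hβ₀⟩⟩
  -- open sets in cantorTop
  have hopenA : ∀ A : Set X, IsOpen {x : Set (Set X) | A ∈ x} :=
    fun A => TopologicalSpace.GenerateOpen.basic _ (Or.inl ⟨A, rfl⟩)
  have hopenA' : ∀ A : Set X, IsOpen {x : Set (Set X) | A ∉ x} :=
    fun A => TopologicalSpace.GenerateOpen.basic _ (Or.inr ⟨A, rfl⟩)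
  constructor
  · -- homeomorphism → limit condition
    intro H β hβlim
    apply Set.Subset.antisymm
    · intro A hA
      have hop : IsOpen (h ⁻¹' (Subtype.val ⁻¹' {x : Set (Set X) | A ∈ x})) :=
        ((hopenA A).preimage continuous_subtype_val).preimage H.continuous
      have hmem : β ∈ h ⁻¹' (Subtype.val ⁻¹' {x : Set (Set X) | A ∈ x}) := hA
      have h0α : (0 : Ordinal) < α := lt_of_le_of_lt (zero_le (a := _)) β.2
      have hl : ∃ l : ↥(Set.Iio α), l < β := ⟨⟨0, h0α⟩, by exact hβlim.pos⟩
      obtain ⟨l, hlβ, hIoc⟩ := exists_Ioc_subset_of_mem_nhds (hop.mem_nhds hmem) hl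
      have hlβ' : (l : Ordinal) < (β : Ordinal) := hlβ
      have hsuccβ : (l : Ordinal) + 1 < (β : Ordinal) := by
        rw [Ordinal.add_one_eq_succ]
        exact hβlim.succ_lt hlβ'
      set γ : ↥(Set.Iio α) := ⟨(l : Ordinal) + 1, lt_trans hsuccβ β.2⟩ with hγ
      have hγβ : γ < β := hsuccβ
      have hlγ : l < γ := by
        show (l : Ordinal) < (l : Ordinal) + 1
        rw [Ordinal.add_one_eq_succ]
        exact Order.lt_succ _
      have hAγ : A ∈ a γ := hIoc ⟨hlγ, le_of_lt hγβ⟩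
      exact Set.mem_iUnion.2 ⟨γ, Set.mem_iUnion.2 ⟨hγβ, hAγ⟩⟩
    · intro A hA
      obtain ⟨γ, hγ⟩ := Set.mem_iUnion.1 hA
      obtain ⟨hγβ, hAγ⟩ := Set.mem_iUnion.1 hγ
      exact (hmono _ _ hγβ).subset hAγ
  · -- limit condition → homeomorphism
    intro hlim
    have hcont : Continuous h := by
      rw [continuous_induced_rng]
      apply continuous_generateFrom_iff.mpr
      rintro s (⟨A, rfl⟩ | ⟨A, rfl⟩)
      · -- preimage is {β | A ∈ a β}
        show IsOpen {β : ↥(Set.Iio α) | A ∈ a β}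
        by_cases hne : ∃ β : ↥(Set.Iio α), A ∈ a β
        · obtain ⟨β₀, hβ₀⟩ := minP A hne
          have hP : {β : ↥(Set.Iio α) | A ∈ a β} = Set.Ici β₀ := Set.ext fun x => hβ₀ x
          rw [hP]
          rcases Ordinal.zero_or_succ_or_isSuccLimit (β₀ : Ordinal) with h0 | ⟨δ, hδ⟩ | hLim
          · have : Set.Ici β₀ = Set.univ := by
              ext x
              simp only [Set.mem_Ici, Set.mem_univ, iff_true]
              show (β₀ : Ordinal) ≤ (x : Ordinal)
              rw [h0]; exact zero_le (a := _)
            rw [this]; exact isOpen_univ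
          · replace hδ := hδ.symm
            have hδβ₀ : δ < (β₀ : Ordinal) := by rw [hδ]; exact Order.lt_succ δ
            have hδα : δ < α := lt_trans hδβ₀ β₀.2
            have : Set.Ici β₀ = Set.Ioi (⟨δ, hδα⟩ : ↥(Set.Iio α)) := by
              ext x
              simp only [Set.mem_Ici, Set.mem_Ioi]
              constructor
              · intro hx
                show δ < (x : Ordinal)
                exact lt_of_lt_of_le hδβ₀ hx
              · intro hx
                show (β₀ : Ordinal) ≤ (x : Ordinal)
                rw [hδ]
                exact Order.succ_le_of_lt hx
            rw [this]; exact isOpen_Ioi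
          · exfalso
            have hAβ₀ : A ∈ a β₀ := (hβ₀ β₀).2 le_rfl
            rw [hlim β₀ hLim] at hAβ₀
            obtain ⟨γ, hγ⟩ := Set.mem_iUnion.1 hAβ₀
            obtain ⟨hγβ, hAγ⟩ := Set.mem_iUnion.1 hγ
            have : β₀ ≤ γ := (hβ₀ γ).1 hAγ
            exact absurd hγβ (not_lt.2 this)
        · have : {β : ↥(Set.Iio α) | A ∈ a β} = ∅ := by
            ext x; simp only [Set.mem_setOf_eq, Set.mem_empty_iff_false, iff_false]
            exact fun hx => hne ⟨x, hx⟩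
          rw [this]; exact isOpen_empty
      · -- preimage is {β | A ∉ a β}
        show IsOpen {β : ↥(Set.Iio α) | A ∉ a β}
        by_cases hne : ∃ β : ↥(Set.Iio α), A ∈ a β
        · obtain ⟨β₀, hβ₀⟩ := minP A hne
          have hP : {β : ↥(Set.Iio α) | A ∉ a β} = Set.Iio β₀ := by
            ext x
            simp only [Set.mem_setOf_eq, Set.mem_Iio, hβ₀ x, not_le]
          rw [hP]; exact isOpen_Iio
        · have : {β : ↥(Set.Iio α) | A ∉ a β} = Set.univ := by
            ext x; simp only [Set.mem_setOf_eq, Set.mem_univ, iff_true]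
            exact fun hx => hne ⟨x, hx⟩
          rw [this]; exact isOpen_univ
    -- images of intervals are open
    have openIic : ∀ (d : ↥(Set.Iio α)), (d : Ordinal) + 1 < α → IsOpen (h '' Set.Iic d) := by
      intro d hd
      set d' : ↥(Set.Iio α) := ⟨(d : Ordinal) + 1, hd⟩ with hd'
      have hdd' : (d : Ordinal) < (d' : Ordinal) := by
        show (d : Ordinal) < (d : Ordinal) + 1
        rw [Ordinal.add_one_eq_succ]; exact Order.lt_succ _
      obtain ⟨A, hA1, hA2⟩ := Set.exists_of_ssubset (hmono d d' hdd')
      have himg : h '' Set.Iic d = Subtype.val ⁻¹' {x : Set (Set X) | A ∉ x} := by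
        ext y
        constructor
        · rintro ⟨β, hβ, rfl⟩
          exact fun hAy => hA2 (hsub hβ hAy)
        · intro hy
          obtain ⟨β, hβ⟩ := y.2
          refine ⟨β, ?_, Subtype.ext hβ⟩
          by_contra hdβ
          simp only [Set.mem_Iic, not_le] at hdβ
          have : (d' : Ordinal) ≤ (β : Ordinal) := by
            show (d : Ordinal) + 1 ≤ (β : Ordinal)
            rw [Ordinal.add_one_eq_succ]
            exact Order.succ_le_of_lt hdβ
          exact hy (by rw [← hβ] at *; exact hsub this hA1)
      rw [himg]
      exact (hopenA' A).preimage continuous_subtype_val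
    have openIoi : ∀ c : ↥(Set.Iio α), IsOpen (h '' Set.Ioi c) := by
      intro c
      by_cases hc : (c : Ordinal) + 1 < α
      · set c' : ↥(Set.Iio α) := ⟨(c : Ordinal) + 1, hc⟩ with hc'
        have hcc' : (c : Ordinal) < (c' : Ordinal) := by
          show (c : Ordinal) < (c : Ordinal) + 1
          rw [Ordinal.add_one_eq_succ]; exact Order.lt_succ _
        obtain ⟨A, hA1, hA2⟩ := Set.exists_of_ssubset (hmono c c' hcc')
        have himg : h '' Set.Ioi c = Subtype.val ⁻¹' {x : Set (Set X) | A ∈ x} := by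
          ext y
          constructor
          · rintro ⟨β, hβ, rfl⟩
            have : (c' : Ordinal) ≤ (β : Ordinal) := by
              show (c : Ordinal) + 1 ≤ (β : Ordinal)
              rw [Ordinal.add_one_eq_succ]
              exact Order.succ_le_of_lt hβ
            exact hsub this hA1
          · intro hy
            obtain ⟨β, hβ⟩ := y.2
            refine ⟨β, ?_, Subtype.ext hβ⟩
            by_contra hcβ
            simp only [Set.mem_Ioi, not_lt] at hcβ
            have : A ∈ a β := by rw [hβ]; exact hy
            exact hA2 (hsub hcβ this)
        rw [himg]
        exact (hopenA A).preimage continuous_subtype_val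
      · have : Set.Ioi c = (∅ : Set ↥(Set.Iio α)) := by
          ext x
          simp only [Set.mem_Ioi, Set.mem_empty_iff_false, iff_false, not_lt]
          show (x : Ordinal) ≤ (c : Ordinal)
          have := x.2
          push_neg at hc
          rw [Ordinal.add_one_eq_succ] at hc
          exact Order.le_of_lt_succ (lt_of_lt_of_le x.2 hc)
        rw [this]
        simp only [Set.image_empty]
        exact isOpen_empty
    have openIio : ∀ c : ↥(Set.Iio α), IsOpen (h '' Set.Iio c) := by
      intro c
      rcases Ordinal.zero_or_succ_or_isSuccLimit (c : Ordinal) with h0 | ⟨δ, hδ⟩ | hLim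
      · have : Set.Iio c = (∅ : Set ↥(Set.Iio α)) := by
          ext x
          simp only [Set.mem_Iio, Set.mem_empty_iff_false, iff_false, not_lt]
          show (c : Ordinal) ≤ (x : Ordinal)
          rw [h0]; exact zero_le (a := _)
        rw [this]
        simp only [Set.image_empty]
        exact isOpen_empty
      · replace hδ := hδ.symm
        have hδc : δ < (c : Ordinal) := by rw [hδ]; exact Order.lt_succ δ
        have hδα : δ < α := lt_trans hδc c.2
        have hIio : Set.Iio c = Set.Iic (⟨δ, hδα⟩ : ↥(Set.Iio α)) := by
          ext x
          simp only [Set.mem_Iio, Set.mem_Iic]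
          constructor
          · intro hx
            show (x : Ordinal) ≤ δ
            exact Order.le_of_lt_succ (by rw [← hδ]; exact hx)
          · intro hx
            show (x : Ordinal) < (c : Ordinal)
            rw [hδ]
            exact Order.lt_succ_of_le hx
        rw [hIio]
        apply openIic
        show δ + 1 < α
        rw [Ordinal.add_one_eq_succ, ← hδ]
        exact c.2
      · have hIio : Set.Iio c = ⋃ (d : ↥(Set.Iio α)) (_ : d < c), Set.Iic d := by
          ext x
          simp only [Set.mem_Iio, Set.mem_iUnion, Set.mem_Iic]
          exact ⟨fun hx => ⟨x, hx, le_rfl⟩, fun ⟨d, hdc, hxd⟩ => lt_of_le_of_lt hxd hdc⟩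
        rw [hIio, Set.image_iUnion]
        apply isOpen_iUnion
        intro d
        rw [Set.image_iUnion]
        apply isOpen_iUnion
        intro hdc
        apply openIic
        show (d : Ordinal) + 1 < α
        rw [Ordinal.add_one_eq_succ]
        exact lt_trans (hLim.succ_lt hdc) c.2
    -- inverse continuity
    set e : ↥(Set.Iio α) ≃ ↥(Set.range a) := Equiv.ofBijective h hbij with he
    have hconti : Continuous e.symm := by
      apply continuous_generateFrom_iff.mpr
      rintro s ⟨c, rfl | rfl⟩
      · rw [← Equiv.image_eq_preimage_symm]
        exact openIoi c
      · rw [← Equiv.image_eq_preimage_symm]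
        exact openIio c
    exact (Homeomorph.mk e hcont hconti).isHomeomorph
end

section
/- Let X be an infinite set and let {A_i : i ∈ ℕ} be any countable family of subsets of X. Then there exists a family L ⊆ P(X) such that: ∅ ∈ L and X ∈ L; A_i ∈ L for every i; L is closed under unions and intersections of pairs of its elements; and L is not closed under arbitrary unions, i.e., there is a subset S ⊆ L with ⋃S ∉ L. In particular the countable intersection ⋂_{i∈ℕ} A_i⁺ of subbasic open sets in 2^{P(X)} contains a bounded sublattice of P(X) that is not a topology on X. -/
theorem stmt6 {X : Type*} [Infinite X] (A : ℕ → Set X) :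
    ∃ L : Set (Set X), (∅ : Set X) ∈ L ∧ Set.univ ∈ L ∧ (∀ i, A i ∈ L) ∧
      (∀ a ∈ L, ∀ b ∈ L, a ∪ b ∈ L ∧ a ∩ b ∈ L) ∧
      ∃ S ⊆ L, ⋃₀ S ∉ L := by
  classical
  set f : Finset (Finset ℕ) → Set X := fun s => ⋃ t ∈ s, ⋂ i ∈ t, A i with hf
  set g : Finset X × Finset (Finset ℕ) → Set X := fun p => ↑p.1 ∪ f p.2 with hg
  have hmem : ∀ (s : Finset (Finset ℕ)) (x : X),
      x ∈ f s ↔ ∃ t ∈ s, ∀ i ∈ t, x ∈ A i := by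
    intro s x; simp [hf]
  have hcap : ∀ s s' : Finset (Finset ℕ),
      f s ∩ f s' = f ((s ×ˢ s').image fun p => p.1 ∪ p.2) := by
    intro s s'
    ext x
    simp only [Set.mem_inter_iff, hmem, Finset.mem_image, Finset.mem_product]
    constructor
    · rintro ⟨⟨t, ht, h1⟩, ⟨t', ht', h2⟩⟩
      refine ⟨t ∪ t', ⟨⟨t, t'⟩, ⟨ht, ht'⟩, rfl⟩, ?_⟩
      intro i hi
      rcases Finset.mem_union.1 hi with h | h
      · exact h1 i h
      · exact h2 i h
    · rintro ⟨u, ⟨⟨t, t'⟩, ⟨ht, ht'⟩, rfl⟩, h⟩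
      exact ⟨⟨t, ht, fun i hi => h i (Finset.mem_union_left _ hi)⟩,
        ⟨t', ht', fun i hi => h i (Finset.mem_union_right _ hi)⟩⟩
  have hcup : ∀ s s' : Finset (Finset ℕ), f s ∪ f s' = f (s ∪ s') := by
    intro s s'; simp [hf, Finset.set_biUnion_union]
  refine ⟨Set.range g, ?_, ?_, ?_, ?_, ?_⟩
  · exact ⟨(∅, ∅), by simp [hg, hf]⟩
  · exact ⟨(∅, {∅}), by simp [hg, hf]⟩
  · intro i; exact ⟨(∅, {{i}}), by simp [hg, hf]⟩
  · rintro a ⟨⟨F, s⟩, rfl⟩ b ⟨⟨F', s'⟩, rfl⟩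
    constructor
    · refine ⟨(F ∪ F', s ∪ s'), ?_⟩
      simp only [hg]
      rw [Finset.coe_union, ← hcup, Set.union_union_union_comm]
    · have hEfin : ((↑F ∩ ↑F' : Set X) ∪ (↑F ∩ f s') ∪ (↑F' ∩ f s)).Finite := by
        apply Set.Finite.union
        apply Set.Finite.union
        · exact (F.finite_toSet.inter_of_left _)
        · exact (F.finite_toSet.inter_of_left _)
        · exact (F'.finite_toSet.inter_of_left _)
      refine ⟨(hEfin.toFinset, (s ×ˢ s').image fun p => p.1 ∪ p.2), ?_⟩
      simp only [hg]
      rw [Set.Finite.coe_toFinset, ← hcap]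
      ext x
      simp only [Set.mem_union, Set.mem_inter_iff]
      tauto
  · have hns : ¬ Function.Surjective g := by
      intro hs
      have h1 : Cardinal.mk (Set X) ≤ Cardinal.mk (Finset X × Finset (Finset ℕ)) :=
        Cardinal.mk_le_of_surjective hs
      have h2 : Cardinal.mk (Finset X × Finset (Finset ℕ)) ≤ Cardinal.mk X := by
        rw [Cardinal.mk_prod, Cardinal.mk_finset_of_infinite, Cardinal.mk_denumerable (Finset (Finset ℕ))]
        simp only [Cardinal.lift_id, Cardinal.lift_aleph0, Cardinal.lift_id']
        rw [Cardinal.mul_aleph0_eq (Cardinal.aleph0_le_mk X)]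
      have h3 : (2 : Cardinal) ^ Cardinal.mk X ≤ Cardinal.mk X := by
        rw [← Cardinal.mk_set]; exact h1.trans h2
      exact absurd h3 (not_le.2 (Cardinal.cantor _))
    rw [Function.Surjective] at hns
    push_neg at hns
    obtain ⟨W, hW⟩ := hns
    have hWr : W ∉ Set.range g := by
      rintro ⟨p, rfl⟩; exact hW p rfl
    refine ⟨{S | ∃ x ∈ W, S = {x}}, ?_, ?_⟩
    · rintro S ⟨x, hx, rfl⟩
      exact ⟨({x}, ∅), by simp [hg, hf]⟩
    · have hU : ⋃₀ {S | ∃ x ∈ W, S = ({x} : Set X)} = W := by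
        ext y
        simp only [Set.mem_sUnion, Set.mem_setOf_eq]
        constructor
        · rintro ⟨S, ⟨x, hx, rfl⟩, hy⟩
          rw [Set.mem_singleton_iff] at hy; rwa [hy]
        · intro hy; exact ⟨{y}, ⟨y, hy, rfl⟩, rfl⟩
      rw [hU]; exact hWr
end

section
/- Let X be an infinite set. Then Top(X), the set of all topologies on X viewed as a subset of 2^{P(X)}, is not a G_δ subset of 2^{P(X)}; that is, Top(X) is not a countable intersection of open subsets of 2^{P(X)}. -/
/-- `τ` is a topology on `X`: it contains `∅` and `X` and is closed under
pairwise intersections and arbitrary unions. -/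
def IsTopologyOn {X : Type*} (τ : Set (Set X)) : Prop :=
  ∅ ∈ τ ∧ Set.univ ∈ τ ∧ (∀ a ∈ τ, ∀ b ∈ τ, a ∩ b ∈ τ) ∧ ∀ S ⊆ τ, ⋃₀ S ∈ τ

open scoped Topology
open Set

/-! ### Auxiliary development -/

section Aux

variable (X : Type*) [Infinite X]

/-- An injection `ℕ → X`. -/
noncomputable def cEmb : ℕ → X := fun n => Infinite.natEmbedding X n

lemma cEmb_inj : Function.Injective (cEmb X) := (Infinite.natEmbedding X).injective

/-- An increasing chain of subsets of `X`, avoiding `cEmb X 0`. -/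
def AA (n : ℕ) : Set X := (fun i => cEmb X (i + 1)) '' Set.Iic n

lemma mem_AA_iff {i n : ℕ} : cEmb X (i + 1) ∈ AA X n ↔ i ≤ n := by
  constructor
  · rintro ⟨j, hj, hji⟩
    rw [Set.mem_Iic] at hj
    have hji' : cEmb X (j + 1) = cEmb X (i + 1) := hji
    have := cEmb_inj X hji'
    omega
  · intro h; exact ⟨i, Set.mem_Iic.2 h, rfl⟩

lemma zero_not_mem_AA (n : ℕ) : cEmb X 0 ∉ AA X n := by
  rintro ⟨j, _, hj⟩
  exact absurd (cEmb_inj X hj) (by omega)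

lemma AA_mono {m n : ℕ} (h : m ≤ n) : AA X m ⊆ AA X n :=
  Set.image_mono (Set.Iic_subset_Iic.mpr h)

lemma AA_ne_empty (n : ℕ) : AA X n ≠ ∅ := by
  intro h
  have : cEmb X (0 + 1) ∈ AA X n := (mem_AA_iff X).2 (Nat.zero_le n)
  simp [h] at this

lemma AA_ne_univ (n : ℕ) : AA X n ≠ Set.univ := by
  intro h
  exact zero_not_mem_AA X n (h ▸ Set.mem_univ _)

lemma AA_inj : Function.Injective (AA X) := by
  intro m n h
  by_contra hne
  rcases Nat.lt_or_ge m n with hlt | hge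
  · have h1 : cEmb X (n + 1) ∈ AA X n := (mem_AA_iff X).2 le_rfl
    rw [← h] at h1
    have := (mem_AA_iff X).1 h1
    omega
  · have hlt : n < m := by omega
    have h1 : cEmb X (m + 1) ∈ AA X m := (mem_AA_iff X).2 le_rfl
    rw [h] at h1
    have := (mem_AA_iff X).1 h1
    omega

/-- The union of the whole chain. -/
def BB : Set X := Set.range (fun i => cEmb X (i + 1))

lemma BB_ne_empty : BB X ≠ ∅ := by
  intro h
  have : cEmb X (0 + 1) ∈ BB X := ⟨0, rfl⟩
  simp [h] at this

lemma BB_ne_univ : BB X ≠ Set.univ := by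
  intro h
  have : cEmb X 0 ∈ BB X := h ▸ Set.mem_univ _
  rcases this with ⟨i, hi⟩
  exact absurd (cEmb_inj X hi) (by omega)

lemma BB_ne_AA (n : ℕ) : BB X ≠ AA X n := by
  intro h
  have : cEmb X ((n + 1) + 1) ∈ BB X := ⟨n + 1, rfl⟩
  rw [h] at this
  have := (mem_AA_iff X).1 this
  omega

/-- The embedding of Cantor space `ℕ → Bool` into `Set (Set X)`. -/
def ff (S : ℕ → Bool) : Set (Set X) :=
  {∅, Set.univ} ∪ AA X '' {n | S n = true}

lemma mem_ff_iff (S : ℕ → Bool) (A : Set X) :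
    A ∈ ff X S ↔ A = ∅ ∨ A = Set.univ ∨ ∃ n, S n = true ∧ AA X n = A := by
  simp only [ff, Set.mem_union, Set.mem_insert_iff, Set.mem_singleton_iff, Set.mem_image,
    Set.mem_setOf_eq]
  tauto

/-- The positive subbasic preimages under `ff` are clopen. -/
lemma isClopen_preimage_pos (A : Set X) :
    IsClopen {S : ℕ → Bool | A ∈ ff X S} := by
  by_cases h0 : A = ∅
  · have : {S : ℕ → Bool | A ∈ ff X S} = Set.univ := by
      ext S; simp [mem_ff_iff, h0]
    rw [this]; exact isClopen_univ
  by_cases h1 : A = Set.univ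
  · have : {S : ℕ → Bool | A ∈ ff X S} = Set.univ := by
      ext S; simp [mem_ff_iff, h1]
    rw [this]; exact isClopen_univ
  by_cases h2 : ∃ k, AA X k = A
  · obtain ⟨k, rfl⟩ := h2
    have : {S : ℕ → Bool | AA X k ∈ ff X S} = (fun S : ℕ → Bool => S k) ⁻¹' {true} := by
      ext S
      simp only [Set.mem_setOf_eq, mem_ff_iff, Set.mem_preimage, Set.mem_singleton_iff]
      constructor
      · rintro (h | h | ⟨n, hn, hAn⟩)
        · exact absurd h h0
        · exact absurd h h1
        · rwa [AA_inj X hAn] at hn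
      · intro h; exact Or.inr (Or.inr ⟨k, h, rfl⟩)
    rw [this]
    exact (isClopen_discrete _).preimage (continuous_apply k)
  · have : {S : ℕ → Bool | A ∈ ff X S} = ∅ := by
      ext S
      simp only [Set.mem_setOf_eq, mem_ff_iff, Set.mem_empty_iff_false, iff_false]
      rintro (h | h | ⟨n, _, hn⟩)
      · exact h0 h
      · exact h1 h
      · exact h2 ⟨n, hn⟩
    rw [this]; exact isClopen_empty

lemma ff_continuous : Continuous[_, cantorTop X] (ff X) := by
  rw [cantorTop, continuous_generateFrom_iff]
  rintro U (⟨A, rfl⟩ | ⟨A, rfl⟩)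
  · exact (isClopen_preimage_pos X A).isOpen
  · have : (ff X) ⁻¹' {x : Set (Set X) | A ∉ x} = {S : ℕ → Bool | A ∈ ff X S}ᶜ := rfl
    rw [this]
    exact (isClopen_preimage_pos X A).compl.isOpen

/-- `ff X S` is a topology iff the support of `S` is finite. -/
lemma ff_mem_top_iff (S : ℕ → Bool) :
    IsTopologyOn (ff X S) ↔ {n | S n = true}.Finite := by
  constructor
  · -- if the support is infinite, the union of the chain is not in `ff X S`
    intro htop
    by_contra hinf
    replace hinf : {n | S n = true}.Infinite := hinf
    have hsub : AA X '' {n | S n = true} ⊆ ff X S := Set.subset_union_right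
    have hB : ⋃₀ (AA X '' {n | S n = true}) = BB X := by
      apply Set.Subset.antisymm
      · rintro y ⟨u, ⟨n, _, rfl⟩, hy⟩
        rcases hy with ⟨i, _, rfl⟩
        exact ⟨i, rfl⟩
      · rintro y ⟨i, rfl⟩
        obtain ⟨n, hn, hin⟩ := hinf.exists_gt i
        exact ⟨AA X n, ⟨n, hn, rfl⟩, (mem_AA_iff X).2 hin.le⟩
    have := htop.2.2.2 _ hsub
    rw [hB, mem_ff_iff] at this
    rcases this with h | h | ⟨n, _, hn⟩
    · exact BB_ne_empty X h
    · exact BB_ne_univ X h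
    · exact BB_ne_AA X n hn.symm
  · intro hfin
    refine ⟨(mem_ff_iff X S _).2 (Or.inl rfl), (mem_ff_iff X S _).2 (Or.inr (Or.inl rfl)),
      ?_, ?_⟩
    · -- closed under binary intersections
      intro a ha b hb
      rw [mem_ff_iff] at ha hb ⊢
      rcases ha with rfl | rfl | ⟨m, hm, rfl⟩
      · exact Or.inl (by simp)
      · rcases hb with rfl | rfl | ⟨n, hn, rfl⟩
        · exact Or.inl (by simp)
        · exact Or.inr (Or.inl (by simp))
        · exact Or.inr (Or.inr ⟨n, hn, by simp⟩)
      · rcases hb with rfl | rfl | ⟨n, hn, rfl⟩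
        · exact Or.inl (by simp)
        · exact Or.inr (Or.inr ⟨m, hm, by simp⟩)
        · rcases le_total m n with h | h
          · exact Or.inr (Or.inr ⟨m, hm, by
              rw [Set.inter_eq_left.2 (AA_mono X h)]⟩)
          · exact Or.inr (Or.inr ⟨n, hn, by
              rw [Set.inter_eq_right.2 (AA_mono X h)]⟩)
    · -- closed under arbitrary unions
      intro T hT
      by_cases huniv : Set.univ ∈ T
      · have : ⋃₀ T = Set.univ :=
          Set.eq_univ_of_univ_subset (Set.subset_sUnion_of_mem huniv)
        rw [this, mem_ff_iff]; exact Or.inr (Or.inl rfl)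
      · set t : Set ℕ := {n | S n = true ∧ AA X n ∈ T} with ht_def
        have htfin : t.Finite := hfin.subset (fun n hn => hn.1)
        have hTel : ∀ u ∈ T, u = ∅ ∨ ∃ n ∈ t, u = AA X n := by
          intro u hu
          have := (mem_ff_iff X S u).1 (hT hu)
          rcases this with rfl | rfl | ⟨n, hn, rfl⟩
          · exact Or.inl rfl
          · exact absurd hu huniv
          · exact Or.inr ⟨n, ⟨hn, hu⟩, rfl⟩
        by_cases hte : t = ∅
        · have : ⋃₀ T = ∅ := by
            apply Set.eq_empty_of_subset_empty
            rintro y ⟨u, hu, hy⟩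
            rcases hTel u hu with rfl | ⟨n, hn, _⟩
            · exact hy
            · simp [hte] at hn
          rw [this, mem_ff_iff]; exact Or.inl rfl
        · obtain ⟨m, hm, hmax⟩ :=
            Set.Finite.exists_maximalFor id t htfin (Set.nonempty_iff_ne_empty.2 hte)
          have hble : ∀ n ∈ t, n ≤ m := by
            intro n hn
            rcases le_total n m with h | h
            · exact h
            · exact (hmax hn h).ge
          have : ⋃₀ T = AA X m := by
            apply Set.Subset.antisymm
            · rintro y ⟨u, hu, hy⟩
              rcases hTel u hu with rfl | ⟨n, hn, rfl⟩
              · exact absurd hy (Set.notMem_empty y)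
              · exact AA_mono X (hble n hn) hy
            · exact Set.subset_sUnion_of_mem hm.2
          rw [this, mem_ff_iff]
          exact Or.inr (Or.inr ⟨m, hm.1, rfl⟩)

end Aux

/-- Preimage of a Gδ set under a continuous map is Gδ. -/
lemma isGδ_preimage {α β : Type*} [TopologicalSpace α] [TopologicalSpace β] {f : α → β}
    (hf : Continuous f) {s : Set β} (hs : IsGδ s) : IsGδ (f ⁻¹' s) := by
  obtain ⟨T, hTo, hTc, rfl⟩ := hs
  refine ⟨(f ⁻¹' ·) '' T, ?_, hTc.image _, ?_⟩
  · rintro t ⟨u, hu, rfl⟩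
    exact (hTo u hu).preimage hf
  · rw [Set.preimage_sInter, Set.sInter_image]

/-- The set of finite-support elements of Cantor space. -/
def finSupp : Set (ℕ → Bool) := {S | {n | S n = true}.Finite}

lemma finSupp_countable : finSupp.Countable := by
  have : finSupp ⊆ Set.range (fun t : Finset ℕ => fun n => decide (n ∈ t)) := by
    intro S hS
    refine ⟨hS.toFinset, ?_⟩
    funext n
    rcases h : S n with _ | _ <;> simp [Set.Finite.mem_toFinset (hs := hS), h]
  exact (Set.countable_range _).mono this

lemma finSupp_dense : Dense finSupp := by
  rw [dense_iff_inter_open]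
  rintro U hU ⟨x, hx⟩
  obtain ⟨I, u, hIu, hsub⟩ := isOpen_pi_iff.1 hU x hx
  refine ⟨fun n => if n ∈ I then x n else false, hsub ?_, ?_⟩
  · intro a ha
    have ha' : a ∈ I := ha
    simp only [ha', if_true]
    exact (hIu a ha').2
  · refine Set.Finite.subset I.finite_toSet ?_
    intro n hn
    by_contra h
    simp only [Set.mem_setOf_eq, if_neg (by exact_mod_cast h)] at hn
    exact Bool.false_ne_true hn

lemma singleton_nowhereDense (x : ℕ → Bool) : IsNowhereDense {x} := by
  rw [(isClosed_singleton).isNowhereDense_iff]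
  rw [Set.eq_empty_iff_forall_notMem]
  intro y hy
  have hyx : y ∈ ({x} : Set (ℕ → Bool)) := interior_subset hy
  rw [Set.mem_singleton_iff] at hyx
  subst hyx
  obtain ⟨I, u, hIu, hsub⟩ := isOpen_pi_iff.1 isOpen_interior y hy
  obtain ⟨m, hm⟩ := Infinite.exists_notMem_finset I
  set z : ℕ → Bool := Function.update y m (!y m) with hz
  have hzmem : z ∈ (I : Set ℕ).pi u := by
    intro a ha
    have : a ≠ m := fun h => hm (h ▸ ha)
    rw [hz, Function.update_of_ne this]
    exact (hIu a ha).2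
  have hz' : z ∈ ({y} : Set (ℕ → Bool)) := interior_subset (hsub hzmem)
  rw [Set.mem_singleton_iff] at hz'
  have : z = y := hz'
  have hzm : z m = !y m := by rw [hz, Function.update_self]
  rw [this] at hzm
  exact (Bool.not_ne_self (y m)).symm hzm

lemma finSupp_meagre : IsMeagre finSupp := by
  rw [isMeagre_iff_countable_union_isNowhereDense]
  refine ⟨(fun x => ({x} : Set (ℕ → Bool))) '' finSupp, ?_, finSupp_countable.image _, ?_⟩
  · rintro t ⟨x, _, rfl⟩
    exact singleton_nowhereDense x
  · intro x hx
    exact ⟨{x}, ⟨x, hx, rfl⟩, rfl⟩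

theorem stmt7 {X : Type*} [Infinite X] :
    ¬ @IsGδ _ (cantorTop X) {τ : Set (Set X) | IsTopologyOn τ} := by
  intro h
  have hpre : ff X ⁻¹' {τ : Set (Set X) | IsTopologyOn τ} = finSupp := by
    ext S
    exact ff_mem_top_iff X S
  have hGδ : IsGδ finSupp := by
    rw [← hpre]
    exact @isGδ_preimage _ _ _ (cantorTop X) _ (ff_continuous X) _ h
  have hres : finSupp ∈ residual (ℕ → Bool) := residual_of_dense_Gδ hGδ finSupp_dense
  have hres' : finSuppᶜ ∈ residual (ℕ → Bool) := finSupp_meagre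
  have : (∅ : Set (ℕ → Bool)) ∈ residual (ℕ → Bool) := by
    have := Filter.inter_mem hres hres'
    rwa [Set.inter_compl_self] at this
  have hdense : Dense (∅ : Set (ℕ → Bool)) := dense_of_mem_residual this
  obtain ⟨y, hy⟩ := hdense.nonempty
  exact hy
end

section
/- Let X be an infinite set and let (O_n)_{n∈ℕ} be any countable family of open subsets of 2^{P(X)} each of which contains the discrete topology P(X) (the top element of 2^{P(X)}). Then ⋂_{n∈ℕ} O_n contains an element L ⊆ P(X) such that ∅, X ∈ L, L is closed under unions and intersections of pairs of its elements, but L is not a topology on X (L is not closed under arbitrary unions). In particular, no countable intersection of open sets containing the discrete topology is contained in Top(X). -/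
open scoped Topology

attribute [local instance] Classical.propDecidable

/-- Any open set in the Cantor cube containing the top point `univ` contains a basic
neighborhood determined by finitely many positive coordinates. -/
theorem cantor_support {X : Type*} (U : Set (Set (Set X))) (h : IsOpen[cantorTop X] U)
    (hU : Set.univ ∈ U) : ∃ F : Set (Set X), F.Finite ∧ ∀ y : Set (Set X), F ⊆ y → y ∈ U := by
  revert hU
  induction h with
  | basic V hV =>
    intro hU
    rcases hV with ⟨A, rfl⟩ | ⟨A, rfl⟩
    · exact ⟨{A}, Set.finite_singleton A, fun y hy => hy rfl⟩
    · exact absurd trivial hU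
  | univ => exact fun _ => ⟨∅, Set.finite_empty, fun y _ => trivial⟩
  | inter V W _ _ ihV ihW =>
    intro hU
    obtain ⟨F1, hF1, h1⟩ := ihV hU.1
    obtain ⟨F2, hF2, h2⟩ := ihW hU.2
    exact ⟨F1 ∪ F2, hF1.union hF2, fun y hy =>
      ⟨h1 y (Set.union_subset_iff.mp hy).1, h2 y (Set.union_subset_iff.mp hy).2⟩⟩
  | sUnion 𝒮 _ ih =>
    intro hU
    obtain ⟨V, hV, hUV⟩ := hU
    obtain ⟨F, hF, hFV⟩ := ih V hV hUV
    exact ⟨F, hF, fun y hy => ⟨V, hV, hFV y hy⟩⟩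

section lat
variable {X : Type*} (gens : Set (Set X))

/-- The element of the lattice generated by `gens` coded by a finite family of finite
sets of generators: the union over the family of the intersections. -/
def latOf (𝒯 : Finset (Finset ↥gens)) : Set X :=
  ⋃ t ∈ 𝒯, ⋂ g ∈ t, (g : Set X)

theorem latOf_empty : latOf gens ∅ = ∅ := by simp [latOf]

theorem latOf_gen {g : Set X} (hg : g ∈ gens) : latOf gens {{⟨g, hg⟩}} = g := by
  ext x
  simp only [latOf, Set.mem_iUnion, Set.mem_iInter, Finset.mem_singleton]
  constructor
  · rintro ⟨t, rfl, h⟩; exact h ⟨g, hg⟩ (Finset.mem_singleton_self _)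
  · intro hx; exact ⟨{⟨g, hg⟩}, rfl, by simpa⟩

theorem latOf_union (𝒯₁ 𝒯₂ : Finset (Finset ↥gens)) :
    latOf gens (𝒯₁ ∪ 𝒯₂) = latOf gens 𝒯₁ ∪ latOf gens 𝒯₂ := by
  ext x
  simp only [latOf, Set.mem_iUnion, Set.mem_iInter, Set.mem_union, Finset.mem_union]
  constructor
  · rintro ⟨t, h1 | h2, h⟩
    · exact Or.inl ⟨t, h1, h⟩
    · exact Or.inr ⟨t, h2, h⟩
  · rintro (⟨t, h1, h⟩ | ⟨t, h2, h⟩)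
    · exact ⟨t, Or.inl h1, h⟩
    · exact ⟨t, Or.inr h2, h⟩

theorem latOf_inter (𝒯₁ 𝒯₂ : Finset (Finset ↥gens)) :
    latOf gens (Finset.image (fun p => p.1 ∪ p.2) (𝒯₁ ×ˢ 𝒯₂)) =
      latOf gens 𝒯₁ ∩ latOf gens 𝒯₂ := by
  ext x
  simp only [latOf, Set.mem_iUnion, Set.mem_iInter, Set.mem_inter_iff,
    Finset.mem_image, Finset.mem_product, Finset.mem_union, Prod.exists]
  constructor
  · rintro ⟨t, ⟨t₁, t₂, ⟨h1, h2⟩, rfl⟩, h⟩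
    exact ⟨⟨t₁, h1, fun g hg => h g (Finset.mem_union_left _ hg)⟩,
      ⟨t₂, h2, fun g hg => h g (Finset.mem_union_right _ hg)⟩⟩
  · rintro ⟨⟨t₁, h1, hx1⟩, ⟨t₂, h2, hx2⟩⟩
    exact ⟨t₁ ∪ t₂, ⟨t₁, t₂, ⟨h1, h2⟩, rfl⟩,
      fun g hg => (Finset.mem_union.mp hg).elim (hx1 g) (hx2 g)⟩

theorem latOf_mem_range {X : Type*} (gens : Set (Set X)) (g : Set X) (hg : g ∈ gens) :
    g ∈ Set.range (latOf gens) := Set.mem_range.mpr ⟨_, latOf_gen gens hg⟩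

theorem lat_countable (h : gens.Countable) : (Set.range (latOf gens)).Countable := by
  have := h.to_subtype
  exact Set.countable_range _
end lat

set_option maxHeartbeats 1000000 in
theorem stmt8 {X : Type*} [Infinite X] (O : ℕ → Set (Set (Set X)))
    (hopen : ∀ n, IsOpen[cantorTop X] (O n))
    (hmem : ∀ n, (Set.univ : Set (Set X)) ∈ O n) :
    ∃ L ∈ ⋂ n, O n, (∅ : Set X) ∈ L ∧ Set.univ ∈ L ∧
      (∀ a ∈ L, ∀ b ∈ L, a ∪ b ∈ L ∧ a ∩ b ∈ L) ∧ ¬ IsTopologyOn L ∧ ∃ S ⊆ L, ⋃₀ S ∉ L := by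
  choose F hFfin hF using fun n => cantor_support (O n) (hopen n) (hmem n)
  set e : ℕ ↪ X := Infinite.natEmbedding X with he
  set gens : Set (Set X) :=
    ((⋃ n, F n) ∪ {Set.univ}) ∪ (⋃ n, {({e n} : Set X)}) with hgens
  set L : Set (Set X) := Set.range (latOf gens) with hL
  have gen_mem : ∀ g ∈ gens, g ∈ L := by
    intro g hg
    rw [hL]
    exact latOf_mem_range gens g hg
  have hsing : ∀ n : ℕ, ({e n} : Set X) ∈ gens := fun n =>
    Or.inr (Set.mem_iUnion.mpr ⟨n, rfl⟩)
  have hFg : ∀ n, F n ⊆ gens := fun n A hA =>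
    Or.inl (Or.inl (Set.mem_iUnion.mpr ⟨n, hA⟩))
  have hLmem : L ∈ ⋂ n, O n :=
    Set.mem_iInter.mpr fun n => hF n L fun A hA => gen_mem A (hFg n hA)
  have hgc : gens.Countable :=
    ((Set.countable_iUnion fun n => (hFfin n).countable).union
      (Set.countable_singleton _)).union
      (Set.countable_iUnion fun n => Set.countable_singleton _)
  have hLc : L.Countable := by rw [hL]; exact lat_countable gens hgc
  have hempty : (∅ : Set X) ∈ L := by
    rw [hL]; exact Set.mem_range.mpr ⟨_, latOf_empty gens⟩
  have hclosed : ∀ a ∈ L, ∀ b ∈ L, a ∪ b ∈ L ∧ a ∩ b ∈ L := by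
    intro a ha b hb
    rw [hL] at ha hb
    obtain ⟨𝒯₁, rfl⟩ := ha
    obtain ⟨𝒯₂, rfl⟩ := hb
    constructor
    · rw [hL]; exact Set.mem_range.mpr ⟨_, latOf_union gens 𝒯₁ 𝒯₂⟩
    · rw [hL]; exact Set.mem_range.mpr ⟨_, latOf_inter gens 𝒯₁ 𝒯₂⟩
  have hdiag : ∃ T : Set ℕ, (⇑e) '' T ∉ L := by
    by_contra hcon
    push_neg at hcon
    haveI := hLc.to_subtype
    have hinj : Function.Injective fun T : Set ℕ => (⟨(⇑e) '' T, hcon T⟩ : ↥L) := by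
      intro T₁ T₂ h
      have : (⇑e) '' T₁ = (⇑e) '' T₂ := congrArg Subtype.val h
      exact Set.image_injective.mpr e.injective this
    have : Countable (Set ℕ) := Function.Injective.countable hinj
    obtain ⟨f, hf⟩ := (countable_iff_exists_injective (Set ℕ)).mp this
    exact Function.cantor_injective f hf
  obtain ⟨T, hT⟩ := hdiag
  have hS : (fun n => ({e n} : Set X)) '' T ⊆ L := by
    rintro _ ⟨n, _, rfl⟩; exact gen_mem _ (hsing n)
  have heq : ⋃₀ ((fun n => ({e n} : Set X)) '' T) = (⇑e) '' T := by
    ext x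
    simp [Set.sUnion_image, eq_comm]
  refine ⟨L, hLmem, hempty, gen_mem _ (Or.inl (Or.inr rfl)), hclosed, ?_, ?_⟩
  · rintro ⟨-, -, -, h4⟩
    apply hT
    have := h4 _ hS
    rwa [heq] at this
  · refine ⟨(fun n => ({e n} : Set X)) '' T, hS, ?_⟩
    rwa [heq]
end

section
/- Let X be an infinite set. Then Top(X), the set of all topologies on X viewed as a subset of 2^{P(X)}, is not an F_σ subset of 2^{P(X)}; that is, Top(X) is not a countable union of closed subsets of 2^{P(X)}. -/
namespace Stmt9Aux

open Set

variable (X : Type*) [Infinite X]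

noncomputable def pt (k m : ℕ) : X := Infinite.natEmbedding X (2 * Nat.pair k m)

lemma pt_inj {k m k' m' : ℕ} (h : pt X k m = pt X k' m') : k = k' ∧ m = m' := by
  have h1 := (Infinite.natEmbedding X).injective h
  have h2 : Nat.pair k m = Nat.pair k' m' := by omega
  exact Nat.pair_eq_pair.mp h2

def Cs (k n : ℕ) : Set X := {y | ∃ a b, (a < k ∨ (a = k ∧ b ≤ n)) ∧ y = pt X a b}
def Ls (k : ℕ) : Set X := {y | ∃ a b, a ≤ k ∧ y = pt X a b}
def Afull : Set X := {y | ∃ a b, y = pt X a b}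

lemma pt_mem_Cs {a b k n : ℕ} : pt X a b ∈ Cs X k n ↔ (a < k ∨ (a = k ∧ b ≤ n)) := by
  constructor
  · rintro ⟨a', b', hc, he⟩
    obtain ⟨rfl, rfl⟩ := pt_inj X he
    exact hc
  · intro h; exact ⟨a, b, h, rfl⟩

lemma pt_mem_Ls {a b k : ℕ} : pt X a b ∈ Ls X k ↔ a ≤ k := by
  constructor
  · rintro ⟨a', b', hc, he⟩
    obtain ⟨rfl, rfl⟩ := pt_inj X he
    exact hc
  · intro h; exact ⟨a, b, h, rfl⟩

lemma pt_mem_Afull (a b : ℕ) : pt X a b ∈ Afull X := ⟨a, b, rfl⟩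

lemma e1_notMem_Afull : Infinite.natEmbedding X 1 ∉ Afull X := by
  rintro ⟨a, b, he⟩
  have := (Infinite.natEmbedding X).injective he
  omega

lemma Cs_subset_Afull (k n : ℕ) : Cs X k n ⊆ Afull X := by
  rintro y ⟨a, b, _, rfl⟩; exact ⟨a, b, rfl⟩

lemma Ls_subset_Afull (k : ℕ) : Ls X k ⊆ Afull X := by
  rintro y ⟨a, b, _, rfl⟩; exact ⟨a, b, rfl⟩

lemma Cs_mono {k n k' n' : ℕ} (h : k < k' ∨ (k = k' ∧ n ≤ n')) :
    Cs X k n ⊆ Cs X k' n' := by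
  rintro y ⟨a, b, hc, rfl⟩; exact ⟨a, b, by omega, rfl⟩

lemma Cs_ne_empty (k n : ℕ) : Cs X k n ≠ ∅ := by
  intro h
  have : pt X k 0 ∈ Cs X k n := (pt_mem_Cs X).mpr (Or.inr ⟨rfl, Nat.zero_le n⟩)
  rw [h] at this; exact this

lemma Cs_ne_univ (k n : ℕ) : Cs X k n ≠ univ := by
  intro h
  exact e1_notMem_Afull X (Cs_subset_Afull X k n (h ▸ mem_univ _))

lemma Cs_ne_Afull (k n : ℕ) : Cs X k n ≠ Afull X := by
  intro h
  have : pt X (k + 1) 0 ∈ Cs X k n := h ▸ pt_mem_Afull X (k + 1) 0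
  have := (pt_mem_Cs X).mp this
  omega

lemma Cs_injective {k n k' n' : ℕ} (h : Cs X k n = Cs X k' n') : k = k' ∧ n = n' := by
  have h1 : pt X k' 0 ∈ Cs X k n := h ▸ (pt_mem_Cs X).mpr (Or.inr ⟨rfl, Nat.zero_le _⟩)
  have h2 : pt X k 0 ∈ Cs X k' n' := h ▸ (pt_mem_Cs X).mpr (Or.inr ⟨rfl, Nat.zero_le _⟩)
  have h1' := (pt_mem_Cs X).mp h1
  have h2' := (pt_mem_Cs X).mp h2
  have hk : k = k' := by omega
  subst hk
  have h3 : pt X k n ∈ Cs X k n' := h ▸ (pt_mem_Cs X).mpr (Or.inr ⟨rfl, le_refl _⟩)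
  have h4 : pt X k n' ∈ Cs X k n := h ▸ (pt_mem_Cs X).mpr (Or.inr ⟨rfl, le_refl _⟩)
  have h3' := (pt_mem_Cs X).mp h3
  have h4' := (pt_mem_Cs X).mp h4
  exact ⟨rfl, by omega⟩

lemma Ls_ne_empty (k : ℕ) : Ls X k ≠ ∅ := by
  intro h
  have : pt X k 0 ∈ Ls X k := (pt_mem_Ls X).mpr le_rfl
  rw [h] at this; exact this

lemma Ls_ne_univ (k : ℕ) : Ls X k ≠ univ := by
  intro h
  exact e1_notMem_Afull X (Ls_subset_Afull X k (h ▸ mem_univ _))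

lemma Ls_ne_Afull (k : ℕ) : Ls X k ≠ Afull X := by
  intro h
  have : pt X (k + 1) 0 ∈ Ls X k := h ▸ pt_mem_Afull X (k + 1) 0
  have := (pt_mem_Ls X).mp this
  omega

lemma Ls_ne_Cs (k k' n' : ℕ) : Ls X k ≠ Cs X k' n' := by
  intro h
  by_cases hk : k' ≤ k
  · have : pt X k (n' + 1) ∈ Cs X k' n' := h ▸ (pt_mem_Ls X).mpr le_rfl
    have := (pt_mem_Cs X).mp this
    omega
  · have : pt X k' 0 ∈ Ls X k := h ▸ (pt_mem_Cs X).mpr (Or.inr ⟨rfl, Nat.zero_le _⟩)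
    have := (pt_mem_Ls X).mp this
    omega

def cnd (k n : ℕ) (x : ℕ → Bool) : Prop := ∀ m, m < n → x (Nat.pair k m) = false

def g (x : ℕ → Bool) : Set (Set X) :=
  {A | A = ∅ ∨ A = Set.univ ∨ A = Afull X ∨ ∃ k n, A = Cs X k n ∧ cnd k n x}

lemma empty_mem_g (x : ℕ → Bool) : (∅ : Set X) ∈ g X x := Or.inl rfl
lemma univ_mem_g (x : ℕ → Bool) : (univ : Set X) ∈ g X x := Or.inr (Or.inl rfl)
lemma Afull_mem_g (x : ℕ → Bool) : Afull X ∈ g X x := Or.inr (Or.inr (Or.inl rfl))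

lemma Cs_mem_g_iff {k n : ℕ} {x : ℕ → Bool} : Cs X k n ∈ g X x ↔ cnd k n x := by
  constructor
  · rintro (h | h | h | ⟨k', n', he, hc⟩)
    · exact absurd h (Cs_ne_empty X k n)
    · exact absurd h (Cs_ne_univ X k n)
    · exact absurd h (Cs_ne_Afull X k n)
    · obtain ⟨rfl, rfl⟩ := Cs_injective X he
      exact hc
  · intro h; exact Or.inr (Or.inr (Or.inr ⟨k, n, rfl, h⟩))


lemma g_isTopology_iff (x : ℕ → Bool) :
    IsTopologyOn (g X x) ↔ ∀ k, ∃ m, x (Nat.pair k m) = true := by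
  constructor
  · intro hτ
    by_contra hx
    push_neg at hx
    obtain ⟨k, hk⟩ := hx
    have hk' : ∀ m, x (Nat.pair k m) = false := by
      intro m
      have := hk m
      revert this
      cases x (Nat.pair k m) <;> simp
    have hsub : {A : Set X | ∃ n, A = Cs X k n} ⊆ g X x := by
      rintro A ⟨n, rfl⟩
      exact Or.inr (Or.inr (Or.inr ⟨k, n, rfl, fun m _ => hk' m⟩))
    have hmem := hτ.2.2.2 _ hsub
    have heq : ⋃₀ {A : Set X | ∃ n, A = Cs X k n} = Ls X k := by
      apply subset_antisymm
      · rintro y ⟨t, ⟨n, rfl⟩, hy⟩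
        obtain ⟨a, b, hab, rfl⟩ := hy
        exact ⟨a, b, by omega, rfl⟩
      · rintro y ⟨a, b, hab, rfl⟩
        rcases eq_or_lt_of_le hab with h | h
        · exact ⟨Cs X k b, ⟨b, rfl⟩, (pt_mem_Cs X).mpr (Or.inr ⟨h, le_refl b⟩)⟩
        · exact ⟨Cs X k 0, ⟨0, rfl⟩, (pt_mem_Cs X).mpr (Or.inl h)⟩
    rw [heq] at hmem
    rcases hmem with h | h | h | ⟨k', n', h, _⟩
    · exact Ls_ne_empty X k h
    · exact Ls_ne_univ X k h
    · exact Ls_ne_Afull X k h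
    · exact Ls_ne_Cs X k k' n' h
  · intro hx
    refine ⟨empty_mem_g X x, univ_mem_g X x, ?_, ?_⟩
    · intro a ha b hb
      rcases ha with rfl | rfl | rfl | ⟨k, n, rfl, hc⟩
      · rw [Set.empty_inter]; exact empty_mem_g X x
      · rw [Set.univ_inter]; exact hb
      · rcases hb with rfl | rfl | rfl | ⟨k', n', rfl, hc'⟩
        · rw [Set.inter_empty]; exact empty_mem_g X x
        · rw [Set.inter_univ]; exact Afull_mem_g X x
        · rw [Set.inter_self]; exact Afull_mem_g X x
        · rw [Set.inter_eq_self_of_subset_right (Cs_subset_Afull X k' n')]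
          exact (Cs_mem_g_iff X).mpr hc'
      · rcases hb with rfl | rfl | rfl | ⟨k', n', rfl, hc'⟩
        · rw [Set.inter_empty]; exact empty_mem_g X x
        · rw [Set.inter_univ]; exact (Cs_mem_g_iff X).mpr hc
        · rw [Set.inter_eq_self_of_subset_left (Cs_subset_Afull X k n)]
          exact (Cs_mem_g_iff X).mpr hc
        · have hcomp : Cs X k n ⊆ Cs X k' n' ∨ Cs X k' n' ⊆ Cs X k n := by
            rcases Nat.lt_trichotomy k k' with h | rfl | h
            · exact Or.inl (Cs_mono X (Or.inl h))
            · rcases Nat.le_total n n' with h | h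
              · exact Or.inl (Cs_mono X (Or.inr ⟨rfl, h⟩))
              · exact Or.inr (Cs_mono X (Or.inr ⟨rfl, h⟩))
            · exact Or.inr (Cs_mono X (Or.inl h))
          rcases hcomp with h | h
          · rw [Set.inter_eq_self_of_subset_left h]
            exact (Cs_mem_g_iff X).mpr hc
          · rw [Set.inter_eq_self_of_subset_right h]
            exact (Cs_mem_g_iff X).mpr hc'
    · intro S hS
      by_cases hU : (univ : Set X) ∈ S
      · have : ⋃₀ S = univ := Set.eq_univ_of_univ_subset (subset_sUnion_of_mem hU)
        rw [this]; exact univ_mem_g X x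
      by_cases hA : Afull X ∈ S
      · have : ⋃₀ S = Afull X := by
          apply subset_antisymm
          · apply sUnion_subset
            intro t ht
            rcases hS ht with rfl | rfl | rfl | ⟨k, n, rfl, _⟩
            · exact empty_subset _
            · exact absurd ht hU
            · exact subset_rfl
            · exact Cs_subset_Afull X k n
          · exact subset_sUnion_of_mem hA
        rw [this]; exact Afull_mem_g X x
      by_cases hK : {k | ∃ n, Cs X k n ∈ S}.Nonempty
      · by_cases hB : BddAbove {k | ∃ n, Cs X k n ∈ S}
        · have hks : sSup {k | ∃ n, Cs X k n ∈ S} ∈ {k | ∃ n, Cs X k n ∈ S} :=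
            Nat.sSup_mem hK hB
          set ks := sSup {k | ∃ n, Cs X k n ∈ S} with hksdef
          obtain ⟨m₀, hm₀⟩ := hx ks
          have hNB : BddAbove {n | Cs X ks n ∈ S} := by
            refine ⟨m₀, fun n hn => ?_⟩
            have hg := hS hn
            rcases hg with h | h | h | ⟨k', n', he, hc⟩
            · exact absurd h (Cs_ne_empty X ks n)
            · exact absurd h (Cs_ne_univ X ks n)
            · exact absurd h (Cs_ne_Afull X ks n)
            · obtain ⟨rfl, rfl⟩ := Cs_injective X he
              by_contra hlt
              push_neg at hlt
              rw [hc m₀ hlt] at hm₀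
              exact Bool.noConfusion hm₀
          have hns : sSup {n | Cs X ks n ∈ S} ∈ {n | Cs X ks n ∈ S} :=
            Nat.sSup_mem hks hNB
          set ns := sSup {n | Cs X ks n ∈ S} with hnsdef
          have : ⋃₀ S = Cs X ks ns := by
            apply subset_antisymm
            · apply sUnion_subset
              intro t ht
              rcases hS ht with rfl | rfl | rfl | ⟨k, n, rfl, _⟩
              · exact empty_subset _
              · exact absurd ht hU
              · exact absurd ht hA
              · have hkK : k ∈ {k | ∃ n, Cs X k n ∈ S} := ⟨n, ht⟩
                have hkle : k ≤ ks := le_csSup hB hkK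
                rcases eq_or_lt_of_le hkle with h | h
                · apply Cs_mono X (Or.inr ⟨h, ?_⟩)
                  exact le_csSup hNB (show Cs X ks n ∈ S from h ▸ ht)
                · exact Cs_mono X (Or.inl h)
            · exact subset_sUnion_of_mem hns
          rw [this]
          exact hS hns
        · have : ⋃₀ S = Afull X := by
            apply subset_antisymm
            · apply sUnion_subset
              intro t ht
              rcases hS ht with rfl | rfl | rfl | ⟨k, n, rfl, _⟩
              · exact empty_subset _
              · exact absurd ht hU
              · exact absurd ht hA
              · exact Cs_subset_Afull X k n
            · rintro y ⟨a, b, rfl⟩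
              rw [not_bddAbove_iff'] at hB
              obtain ⟨k, hkK, hak⟩ := hB a
              obtain ⟨n, hn⟩ := hkK
              exact ⟨Cs X k n, hn, (pt_mem_Cs X).mpr (Or.inl (by omega))⟩
          rw [this]; exact Afull_mem_g X x
      · have : ⋃₀ S = ∅ := by
          rw [Set.eq_empty_iff_forall_notMem]
          rintro y ⟨t, ht, hy⟩
          rcases hS ht with rfl | rfl | rfl | ⟨k, n, rfl, _⟩
          · exact hy
          · exact hU ht
          · exact hA ht
          · exact hK ⟨k, n, ht⟩
        rw [this]; exact empty_mem_g X x


lemma g_continuous : @Continuous (ℕ → Bool) (Set (Set X)) inferInstance (cantorTop X) (g X) := by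
  rw [cantorTop, continuous_generateFrom_iff]
  rintro U (⟨A, rfl⟩ | ⟨A, rfl⟩)
  · -- preimage of A⁺ = {x | A ∈ g X x}
    by_cases h0 : A = ∅ ∨ A = univ ∨ A = Afull X
    · have : g X ⁻¹' {y : Set (Set X) | A ∈ y} = univ := by
        rw [Set.eq_univ_iff_forall]
        intro x
        rcases h0 with rfl | rfl | rfl
        · exact empty_mem_g X x
        · exact univ_mem_g X x
        · exact Afull_mem_g X x
      rw [this]; exact isOpen_univ
    · by_cases hc : ∃ k n, A = Cs X k n
      · obtain ⟨k, n, rfl⟩ := hc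
        have : g X ⁻¹' {y : Set (Set X) | Cs X k n ∈ y} =
            ⋂ m : Fin n, (fun x : ℕ → Bool => x (Nat.pair k m)) ⁻¹' {false} := by
          ext x
          simp only [Set.mem_preimage, Set.mem_setOf_eq, Set.mem_iInter,
            Set.mem_singleton_iff, Cs_mem_g_iff]
          constructor
          · intro h m; exact h m m.2
          · intro h m hm; exact h ⟨m, hm⟩
        rw [this]
        exact isOpen_iInter_of_finite fun m =>
          IsOpen.preimage (continuous_apply (Nat.pair k m)) (isOpen_discrete {false})
      · have : g X ⁻¹' {y : Set (Set X) | A ∈ y} = ∅ := by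
          rw [Set.eq_empty_iff_forall_notMem]
          intro x hx
          rcases hx with h | h | h | ⟨k, n, he, _⟩
          · exact h0 (Or.inl h)
          · exact h0 (Or.inr (Or.inl h))
          · exact h0 (Or.inr (Or.inr h))
          · exact hc ⟨k, n, he⟩
        rw [this]; exact isOpen_empty
  · -- preimage of A⁻ = {x | A ∉ g X x}
    by_cases h0 : A = ∅ ∨ A = univ ∨ A = Afull X
    · have : g X ⁻¹' {y : Set (Set X) | A ∉ y} = ∅ := by
        rw [Set.eq_empty_iff_forall_notMem]
        intro x hx
        apply hx
        rcases h0 with rfl | rfl | rfl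
        · exact empty_mem_g X x
        · exact univ_mem_g X x
        · exact Afull_mem_g X x
      rw [this]; exact isOpen_empty
    · by_cases hc : ∃ k n, A = Cs X k n
      · obtain ⟨k, n, rfl⟩ := hc
        have : g X ⁻¹' {y : Set (Set X) | Cs X k n ∉ y} =
            ⋃ m : Fin n, (fun x : ℕ → Bool => x (Nat.pair k m)) ⁻¹' {true} := by
          ext x
          simp only [Set.mem_preimage, Set.mem_setOf_eq, Set.mem_iUnion,
            Set.mem_singleton_iff, Cs_mem_g_iff]
          constructor
          · intro h
            by_contra hme
            push_neg at hme
            apply h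
            intro m hm
            have := hme ⟨m, hm⟩
            revert this
            cases x (Nat.pair k m) <;> simp
          · rintro ⟨m, hm⟩ h
            rw [h m m.2] at hm
            exact Bool.noConfusion hm
        rw [this]
        exact isOpen_iUnion fun m =>
          IsOpen.preimage (continuous_apply (Nat.pair k m)) (isOpen_discrete {true})
      · have : g X ⁻¹' {y : Set (Set X) | A ∉ y} = univ := by
          rw [Set.eq_univ_iff_forall]
          intro x hx
          rcases hx with h | h | h | ⟨k, n, he, _⟩
          · exact h0 (Or.inl h)
          · exact h0 (Or.inr (Or.inl h))
          · exact h0 (Or.inr (Or.inr h))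
          · exact hc ⟨k, n, he⟩
        rw [this]; exact isOpen_univ

end Stmt9Aux

open scoped Topology

theorem stmt9 {X : Type*} [Infinite X] :
    ¬ ∃ C : ℕ → Set (Set (Set X)), (∀ n, IsClosed[cantorTop X] (C n)) ∧
      {τ : Set (Set X) | IsTopologyOn τ} = ⋃ n, C n := by
  rintro ⟨C, hC, hTop⟩
  classical
  set D : ℕ → Set (ℕ → Bool) := fun n => Stmt9Aux.g X ⁻¹' C n with hDdef
  set N : ℕ → Set (ℕ → Bool) := fun k => {x | ∀ m, x (Nat.pair k m) = false} with hNdef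
  have hDclosed : ∀ n, IsClosed (D n) := fun n =>
    @IsClosed.preimage _ _ _ (cantorTop X) (Stmt9Aux.g X) (Stmt9Aux.g_continuous X) (C n) (hC n)
  have hNclosed : ∀ k, IsClosed (N k) := by
    intro k
    have : N k = ⋂ m : ℕ, (fun x : ℕ → Bool => x (Nat.pair k m)) ⁻¹' {false} := by
      ext x; simp [hNdef, Set.mem_iInter]
    rw [this]
    exact isClosed_iInter fun m =>
      IsClosed.preimage (continuous_apply (Nat.pair k m)) (isClosed_discrete {false})
  have hcover : ⋃ i, Sum.elim D N i = Set.univ := by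
    rw [Set.eq_univ_iff_forall]
    intro x
    by_cases hx : ∀ k, ∃ m, x (Nat.pair k m) = true
    · have h1 : IsTopologyOn (Stmt9Aux.g X x) := (Stmt9Aux.g_isTopology_iff X x).mpr hx
      have h2 : Stmt9Aux.g X x ∈ ⋃ n, C n := hTop ▸ h1
      rw [Set.mem_iUnion] at h2
      obtain ⟨n, hn⟩ := h2
      exact Set.mem_iUnion.mpr ⟨Sum.inl n, hn⟩
    · push_neg at hx
      obtain ⟨k, hk⟩ := hx
      refine Set.mem_iUnion.mpr ⟨Sum.inr k, fun m => ?_⟩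
      have := hk m
      revert this
      cases x (Nat.pair k m) <;> simp
  obtain ⟨i, z, hz⟩ := nonempty_interior_of_iUnion_of_closed
    (f := Sum.elim D N)
    (fun i => by cases i with
      | inl n => exact hDclosed n
      | inr k => exact hNclosed k)
    hcover
  cases i with
  | inl n =>
    obtain ⟨I, u, hu, hpi⟩ := isOpen_pi_iff.mp (isOpen_interior (s := D n)) z hz
    set k0 := I.sup id + 1 with hk0
    set y : ℕ → Bool := fun i => if (Nat.unpair i).1 = k0 then false else z i with hydef
    have hy : y ∈ (I : Set ℕ).pi u := by
      intro i hi
      have h1 : i ≤ I.sup id := Finset.le_sup (f := id) hi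
      have h2 := Nat.unpair_left_le i
      have hne : (Nat.unpair i).1 ≠ k0 := by omega
      show (if (Nat.unpair i).1 = k0 then false else z i) ∈ u i
      rw [if_neg hne]
      exact (hu i hi).2
    have hyD : y ∈ D n := interior_subset (hpi hy)
    have hyT : IsTopologyOn (Stmt9Aux.g X y) := by
      have h2 : Stmt9Aux.g X y ∈ ⋃ n, C n := Set.mem_iUnion.mpr ⟨n, hyD⟩
      rw [← hTop] at h2
      exact h2
    obtain ⟨m, hm⟩ := (Stmt9Aux.g_isTopology_iff X y).mp hyT k0
    have : y (Nat.pair k0 m) = false := by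
      show (if (Nat.unpair (Nat.pair k0 m)).1 = k0 then false else z _) = false
      simp [Nat.unpair_pair]
    rw [this] at hm
    exact Bool.noConfusion hm
  | inr k =>
    obtain ⟨I, u, hu, hpi⟩ := isOpen_pi_iff.mp (isOpen_interior (s := N k)) z hz
    set j := Nat.pair k (I.sup id + 1) with hj
    set y : ℕ → Bool := Function.update z j true with hydef
    have hy : y ∈ (I : Set ℕ).pi u := by
      intro i hi
      have h1 : i ≤ I.sup id := Finset.le_sup (f := id) hi
      have h2 := Nat.right_le_pair k (I.sup id + 1)
      have hne : i ≠ j := by omega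
      show Function.update z j true i ∈ u i
      rw [Function.update_of_ne hne]
      exact (hu i hi).2
    have hyN : y ∈ N k := interior_subset (hpi hy)
    have hfalse : y (Nat.pair k (I.sup id + 1)) = false := hyN (I.sup id + 1)
    have htrue : y (Nat.pair k (I.sup id + 1)) = true := by
      show Function.update z j true j = true
      rw [Function.update_self]
    rw [htrue] at hfalse
    exact Bool.noConfusion hfalse
end

section
/- Let X be a set and let T be an infinite collection of atoms of Top(X), i.e., of topologies of the form {∅, A, X} with A a nonempty proper subset of X. Then the topological closure of T in 2^{P(X)} equals T ∪ {I}, where I = {∅, X} is the trivial (indiscrete) topology on X. -/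
open scoped Topology

theorem stmt11 {X : Type*} (T : Set (Set (Set X))) (hT : T.Infinite)
    (hatom : ∀ τ ∈ T, ∃ A : Set X, A ≠ ∅ ∧ A ≠ Set.univ ∧ τ = {∅, A, Set.univ}) :
    @closure _ (cantorTop X) T = T ∪ {{∅, Set.univ}} := by
  classical
  letI t : TopologicalSpace (Set (Set X)) := cantorTop X
  have hplus : ∀ A : Set X, IsOpen {x : Set (Set X) | A ∈ x} := fun A =>
    TopologicalSpace.isOpen_generateFrom_of_mem (Or.inl ⟨A, rfl⟩)
  -- the atom of a member of T
  set g : Set (Set X) → Set X := fun τ =>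
    if h : ∃ A : Set X, A ≠ ∅ ∧ A ≠ Set.univ ∧ τ = {∅, A, Set.univ} then h.choose else ∅
    with hg
  have hgspec : ∀ τ ∈ T, g τ ≠ ∅ ∧ g τ ≠ Set.univ ∧ τ = {∅, g τ, Set.univ} := by
    intro τ hτ
    have h := hatom τ hτ
    simp only [hg, dif_pos h]
    exact h.choose_spec
  apply subset_antisymm
  · intro x hx
    rw [mem_closure_iff] at hx
    by_cases hxT : x ∈ T
    · exact Or.inl hxT
    have h0 : (∅ : Set X) ∈ x := by
      by_contra h0
      obtain ⟨τ, hτo, hτT⟩ := hx {y | (∅ : Set X) ∉ y}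
        (TopologicalSpace.isOpen_generateFrom_of_mem (Or.inr ⟨∅, rfl⟩)) h0
      obtain ⟨A, -, -, rfl⟩ := hatom τ hτT
      exact hτo (by left; rfl)
    have h1 : (Set.univ : Set X) ∈ x := by
      by_contra h1
      obtain ⟨τ, hτo, hτT⟩ := hx {y | (Set.univ : Set X) ∉ y}
        (TopologicalSpace.isOpen_generateFrom_of_mem (Or.inr ⟨Set.univ, rfl⟩)) h1
      obtain ⟨A, -, -, rfl⟩ := hatom τ hτT
      exact hτo (by right; right; rfl)
    by_cases hxI : x = {∅, Set.univ}
    · exact Or.inr hxI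
    have hIx : ({∅, Set.univ} : Set (Set X)) ⊆ x := by
      intro B hB
      rcases hB with rfl | hB
      · exact h0
      · rw [Set.mem_singleton_iff] at hB; exact hB ▸ h1
    obtain ⟨B, hBx, hBI⟩ : ∃ B ∈ x, B ∉ ({∅, Set.univ} : Set (Set X)) := by
      by_contra h
      push_neg at h
      exact hxI (subset_antisymm h hIx)
    have hB0 : B ≠ ∅ := fun h => hBI (Or.inl h)
    have hB1 : B ≠ Set.univ := fun h => hBI (Or.inr h)
    by_cases hxB : x = {∅, B, Set.univ}
    · exfalso
      obtain ⟨τ, hτo, hτT⟩ := hx {y | B ∈ y} (hplus B) hBx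
      obtain ⟨A, hA0, hA1, rfl⟩ := hatom τ hτT
      rcases hτo with h | h | h
      · exact hB0 h
      · exact hxT (by rw [hxB, h]; exact hτT)
      · exact hB1 h
    · exfalso
      have hBx' : ({∅, B, Set.univ} : Set (Set X)) ⊆ x := by
        intro C hC
        rcases hC with rfl | rfl | hC
        · exact h0
        · exact hBx
        · rw [Set.mem_singleton_iff] at hC; exact hC ▸ h1
      obtain ⟨C, hCx, hCB⟩ : ∃ C ∈ x, C ∉ ({∅, B, Set.univ} : Set (Set X)) := by
        by_contra h
        push_neg at h
        exact hxB (subset_antisymm h hBx')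
      obtain ⟨τ, hτo, hτT⟩ := hx ({y | B ∈ y} ∩ {y | C ∈ y})
        ((hplus B).inter (hplus C)) ⟨hBx, hCx⟩
      obtain ⟨A, hA0, hA1, rfl⟩ := hatom τ hτT
      obtain ⟨hBτ, hCτ⟩ := hτo
      have hBA : B = A := by
        rcases hBτ with h | h | h
        · exact absurd h hB0
        · exact h
        · exact absurd h hB1
      rcases hCτ with h | h | h
      · exact hCB (Or.inl h)
      · exact hCB (Or.inr (Or.inl (h.trans hBA.symm)))
      · exact hCB (Or.inr (Or.inr h))
  · rintro x (hxT | hxI)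
    · exact subset_closure hxT
    · rw [Set.mem_singleton_iff] at hxI
      subst hxI
      have hbasis := TopologicalSpace.isTopologicalBasis_of_subbasis
        (rfl : t = TopologicalSpace.generateFrom _)
      rw [hbasis.mem_closure_iff]
      rintro o ⟨f, ⟨hffin, hfsub⟩, rfl⟩ hIo
      -- forbidden atoms
      have hginj : Set.InjOn g T := by
        intro τ hτ τ' hτ' hgg
        obtain ⟨-, -, h⟩ := hgspec τ hτ
        obtain ⟨-, -, h'⟩ := hgspec τ' hτ'
        rw [h, h', hgg]
      have hSfin : {A : Set X | {y : Set (Set X) | A ∉ y} ∈ f}.Finite := by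
        have : {A : Set X | {y : Set (Set X) | A ∉ y} ∈ f} =
            (fun A : Set X => {y : Set (Set X) | A ∉ y}) ⁻¹' f := rfl
        rw [this]
        apply hffin.preimage
        intro A _ B _ hAB
        by_contra hne
        have h1 : ({A} : Set (Set X)) ∉ {y : Set (Set X) | A ∉ y} := by simp
        have hAB' : {y : Set (Set X) | A ∉ y} = {y : Set (Set X) | B ∉ y} := hAB
        rw [hAB'] at h1
        simp only [Set.mem_setOf_eq, not_not, Set.mem_singleton_iff] at h1
        exact hne h1.symm
      obtain ⟨τ, hτT, hτg⟩ : ∃ τ ∈ T, g τ ∉ {A : Set X | {y : Set (Set X) | A ∉ y} ∈ f} := by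
        by_contra h
        push_neg at h
        have : g '' T ⊆ {A : Set X | {y : Set (Set X) | A ∉ y} ∈ f} := by
          rintro _ ⟨τ, hτ, rfl⟩; exact h τ hτ
        exact absurd ((hT.image hginj).mono this) hSfin.not_infinite
      refine ⟨τ, ?_, hτT⟩
      obtain ⟨hg0, hg1, hτeq⟩ := hgspec τ hτT
      intro u hu
      have hIu : ({∅, Set.univ} : Set (Set X)) ∈ u := hIo u hu
      rcases hfsub hu with ⟨A, rfl⟩ | ⟨A, rfl⟩
      · -- A ∈ I, so A ∈ τ
        rcases hIu with rfl | hA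
        · rw [hτeq]; left; rfl
        · rw [Set.mem_singleton_iff] at hA
          subst hA
          rw [hτeq]; right; right; rfl
      · -- A ∉ I; need A ∉ τ
        simp only [Set.mem_setOf_eq] at hIu ⊢
        rw [hτeq]
        rintro (rfl | rfl | hA)
        · exact hIu (Or.inl rfl)
        · exact hτg hu
        · rw [Set.mem_singleton_iff] at hA
          exact hIu (Or.inr hA)
end

section
/- Let X be a set and let T be an infinite collection of atoms of Top(X), i.e., of topologies of the form {∅, A, X} with A a nonempty proper subset of X, and let I = {∅, X} be the trivial topology. Then the subspace T ∪ {I} of 2^{P(X)} is homeomorphic to the one-point compactification of the discrete space T: the map from OnePoint(T) (T taken with the discrete topology) to the subspace T ∪ {I} sending each τ ∈ T to itself and the point at infinity to I is a homeomorphism. -/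
open scoped Topology

/-- The one-point compactification of the type `D` taken with the discrete topology. -/
def onePointDiscreteTop (D : Type*) : TopologicalSpace (OnePoint D) :=
  letI : TopologicalSpace D := ⊥
  inferInstance

theorem stmt12 {X : Type*} (T : Set (Set (Set X))) (hT : T.Infinite)
    (hatom : ∀ τ ∈ T, ∃ A : Set X, A ≠ ∅ ∧ A ≠ Set.univ ∧ τ = {∅, A, Set.univ}) :
    ∃ f : @Homeomorph (OnePoint ↥T) ↥(T ∪ {{∅, Set.univ}})
        (onePointDiscreteTop ↥T)
        (TopologicalSpace.induced Subtype.val (cantorTop X)),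
      (∀ τ : ↥T, ((f (↑τ : OnePoint ↥T) : ↥(T ∪ {{∅, Set.univ}})) : Set (Set X)) = ↑τ) ∧
      ((f OnePoint.infty : ↥(T ∪ {{∅, Set.univ}})) : Set (Set X)) = {∅, Set.univ} := by
  classical
  letI tX : TopologicalSpace (Set (Set X)) := cantorTop X
  letI tT : TopologicalSpace ↥T := ⊥
  haveI : DiscreteTopology ↥T := ⟨rfl⟩
  choose a ha0 hau haeq using fun τ : ↥T => hatom τ.1 τ.2
  have haa : ∀ τ : ↥T, a τ ∈ τ.1 := fun τ => by
    rw [haeq τ]; exact Or.inr (Or.inl rfl)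
  have hmem : ∀ (τ : ↥T) (s : Set (Set X)), s ∈ T ∪ {{∅, Set.univ}} →
      (a τ ∈ s ↔ s = τ.1) := by
    intro τ s hs
    constructor
    · intro hm
      rcases hs with hs | hs
      · obtain ⟨A, h0, hu, heq⟩ := hatom s hs
        rw [heq] at hm
        rcases hm with h | h | h
        · exact absurd h (ha0 τ)
        · rw [haeq τ, h]; exact heq
        · exact absurd h (hau τ)
      · simp only [Set.mem_singleton_iff] at hs
        subst hs
        rcases hm with h | h
        · exact absurd h (ha0 τ)
        · exact absurd h (hau τ)
    · intro h; rw [h]; exact haa τ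
  have hIT : ({∅, Set.univ} : Set (Set X)) ∉ T := by
    intro h
    obtain ⟨A, h0, hu, heq⟩ := hatom _ h
    have : A ∈ ({∅, Set.univ} : Set (Set X)) := by
      rw [heq]; exact Or.inr (Or.inl rfl)
    rcases this with h' | h'
    · exact h0 h'
    · exact hu h'
  let f : OnePoint ↥T → ↥(T ∪ {{∅, Set.univ}}) := fun z =>
    Option.elim z ⟨{∅, Set.univ}, Or.inr rfl⟩ (fun τ => ⟨τ.1, Or.inl τ.2⟩)
  have hf_some : ∀ τ : ↥T, (f (some τ)).1 = τ.1 := fun τ => rfl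
  have hf_none : (f none).1 = {∅, Set.univ} := rfl
  have hinj : Function.Injective f := by
    intro z1 z2 h
    match z1, z2 with
    | none, none => rfl
    | none, some τ =>
      have h1 : ({∅, Set.univ} : Set (Set X)) = τ.1 := congrArg Subtype.val h
      exact absurd (by rw [h1]; exact τ.2) hIT
    | some τ, none =>
      have h1 : τ.1 = ({∅, Set.univ} : Set (Set X)) := congrArg Subtype.val h
      exact absurd (by rw [← h1]; exact τ.2) hIT
    | some τ1, some τ2 =>
      have h1 := congrArg Subtype.val h
      exact congrArg some (Subtype.ext h1)
  have hsurj : Function.Surjective f := by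
    rintro ⟨y, hy | hy⟩
    · exact ⟨some ⟨y, hy⟩, rfl⟩
    · simp only [Set.mem_singleton_iff] at hy
      exact ⟨none, Subtype.ext hy.symm⟩
  have hsing : ∀ τ : ↥T,
      (Subtype.val ⁻¹' {x : Set (Set X) | a τ ∈ x} : Set ↥(T ∪ {{∅, Set.univ}}))
        = {f (some τ)} := by
    intro τ
    ext z
    simp only [Set.mem_preimage, Set.mem_setOf_eq, Set.mem_singleton_iff]
    rw [hmem τ z.1 z.2]
    exact ⟨fun h => Subtype.ext h, fun h => congrArg Subtype.val h⟩
  have hplus_open : ∀ A : Set X,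
      IsOpen (Subtype.val ⁻¹' {x : Set (Set X) | A ∈ x} : Set ↥(T ∪ {{∅, Set.univ}})) :=
    fun A => (continuous_subtype_val).isOpen_preimage _
      (TopologicalSpace.GenerateOpen.basic _ (Or.inl ⟨A, rfl⟩))
  have hminus_open : ∀ A : Set X,
      IsOpen (Subtype.val ⁻¹' {x : Set (Set X) | A ∉ x} : Set ↥(T ∪ {{∅, Set.univ}})) :=
    fun A => (continuous_subtype_val).isOpen_preimage _
      (TopologicalSpace.GenerateOpen.basic _ (Or.inr ⟨A, rfl⟩))
  have hsing_open : ∀ τ : ↥T, IsOpen ({f (some τ)} : Set ↥(T ∪ {{∅, Set.univ}})) :=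
    fun τ => hsing τ ▸ hplus_open (a τ)
  have hsing_closed : ∀ τ : ↥T, IsClosed ({f (some τ)} : Set ↥(T ∪ {{∅, Set.univ}})) := by
    intro τ
    have hc : ((Subtype.val ⁻¹' {x : Set (Set X) | a τ ∉ x} :
        Set ↥(T ∪ {{∅, Set.univ}})))ᶜ = Subtype.val ⁻¹' {x : Set (Set X) | a τ ∈ x} := by
      ext z; simp
    rw [← hsing τ, ← hc]
    exact (hminus_open (a τ)).isClosed_compl
  have hcont : Continuous f := by
    rw [continuous_induced_rng]
    apply continuous_generateFrom_iff.mpr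
    rintro U (⟨A, rfl⟩ | ⟨A, rfl⟩)
    · rw [OnePoint.isOpen_def]
      refine ⟨fun h => ?_, isOpen_discrete _⟩
      have hA : A ∈ ({∅, Set.univ} : Set (Set X)) := h
      refine Set.Subsingleton.finite ?_ |>.isCompact
      intro τ1 h1 τ2 h2
      exfalso
      have h1' : A ∉ (τ1.1 : Set (Set X)) := h1
      apply h1'
      rw [haeq τ1]
      rcases hA with h' | h'
      · exact Or.inl h'
      · exact Or.inr (Or.inr h')
    · rw [OnePoint.isOpen_def]
      refine ⟨fun h => ?_, isOpen_discrete _⟩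
      have hA : A ∉ ({∅, Set.univ} : Set (Set X)) := h
      have hA0 : A ≠ ∅ := fun h' => hA (Or.inl h')
      have hAu : A ≠ Set.univ := fun h' => hA (Or.inr h')
      refine Set.Subsingleton.finite ?_ |>.isCompact
      intro τ1 h1 τ2 h2
      have h1' : A ∈ (τ1.1 : Set (Set X)) := not_not.mp h1
      have h2' : A ∈ (τ2.1 : Set (Set X)) := not_not.mp h2
      rw [haeq τ1] at h1'
      rw [haeq τ2] at h2'
      have e1 : A = a τ1 := by
        rcases h1' with h' | h' | h'
        · exact absurd h' hA0
        · exact h'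
        · exact absurd h' hAu
      have e2 : A = a τ2 := by
        rcases h2' with h' | h' | h'
        · exact absurd h' hA0
        · exact h'
        · exact absurd h' hAu
      exact Subtype.ext (by rw [haeq τ1, haeq τ2, ← e1, ← e2])
  have hopen : IsOpenMap f := by
    intro s hs
    rw [isOpen_iff_forall_mem_open]
    rintro y ⟨z, hzs, rfl⟩
    match z with
    | some τ =>
      exact ⟨{f (some τ)}, by rintro w rfl; exact ⟨some τ, hzs, rfl⟩, hsing_open τ, rfl⟩
    | none =>
      have hcpt : IsCompact (((↑) ⁻¹' s : Set ↥T)ᶜ) := (OnePoint.isOpen_def.mp hs).1 hzs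
      have hfin : (((↑) ⁻¹' s : Set ↥T)ᶜ).Finite := hcpt.finite (isDiscrete_iff_discreteTopology.mpr inferInstance)
      refine ⟨(⋃ τ ∈ (((↑) ⁻¹' s : Set ↥T)ᶜ),
          ({f (some τ)} : Set ↥(T ∪ {{∅, Set.univ}})))ᶜ, ?_, ?_, ?_⟩
      · intro w hw
        simp only [Set.mem_compl_iff, Set.mem_iUnion, Set.mem_singleton_iff, not_exists,
          Set.mem_preimage] at hw
        rcases hsurj w with ⟨zw, rfl⟩
        match zw with
        | none => exact ⟨none, hzs, rfl⟩
        | some τ =>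
          refine ⟨some τ, ?_, rfl⟩
          by_contra hns
          exact hw τ hns rfl
      · exact isOpen_compl_iff.mpr (hfin.isClosed_biUnion (fun τ _ => hsing_closed τ))
      · simp only [Set.mem_compl_iff, Set.mem_iUnion, Set.mem_singleton_iff, not_exists,
          Set.mem_preimage]
        intro τ hτ h
        have h1 : ({∅, Set.univ} : Set (Set X)) = τ.1 := (congrArg Subtype.val h)
        exact hIT (by rw [h1]; exact τ.2)
  refine ⟨Equiv.toHomeomorphOfContinuousOpen (Equiv.ofBijective f ⟨hinj, hsurj⟩) hcont hopen,
    fun τ => rfl, rfl⟩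
end

section
/- Let X be a set and let T be an infinite collection of topologies on X, each strictly finer than the trivial topology I = {∅, X}, which are pairwise disjoint in the sense that σ ∩ ρ = I for all distinct σ, ρ ∈ T. Then the topological closure of T in 2^{P(X)} equals T ∪ {I}, and this subspace is the one-point compactification of the discrete space T: the map from OnePoint(T) (T taken with the discrete topology) to the subspace T ∪ {I} sending each τ ∈ T to itself and the point at infinity to I is a homeomorphism. -/
open scoped Topology

theorem stmt13 {X : Type*} (T : Set (Set (Set X))) (hT : T.Infinite)
    (htop : ∀ τ ∈ T, IsTopologyOn τ ∧ ({∅, Set.univ} : Set (Set X)) ⊂ τ)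
    (hdisj : ∀ σ ∈ T, ∀ ρ ∈ T, σ ≠ ρ → σ ∩ ρ = ({∅, Set.univ} : Set (Set X))) :
    @closure _ (cantorTop X) T = T ∪ {{∅, Set.univ}} ∧
    ∃ f : @Homeomorph (OnePoint ↥T) ↥(T ∪ {{∅, Set.univ}})
        (onePointDiscreteTop ↥T)
        (TopologicalSpace.induced Subtype.val (cantorTop X)),
      (∀ τ : ↥T, ((f (↑τ : OnePoint ↥T) : ↥(T ∪ {{∅, Set.univ}})) : Set (Set X)) = ↑τ) ∧
      ((f OnePoint.infty : ↥(T ∪ {{∅, Set.univ}})) : Set (Set X)) = {∅, Set.univ} := by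
  classical
  letI t : TopologicalSpace (Set (Set X)) := cantorTop X
  set I : Set (Set X) := {∅, Set.univ} with hIdef
  -- basic facts
  have hInotT : I ∉ T := fun h => (htop I h).2.2 (le_refl _)
  have hsub : ∀ τ ∈ T, I ⊆ τ := fun τ hτ => (htop τ hτ).2.1
  have huniq : ∀ A : Set X, A ∉ I → ∀ σ ∈ T, ∀ ρ ∈ T, A ∈ σ → A ∈ ρ → σ = ρ := by
    intro A hA σ hσ ρ hρ hAσ hAρ
    by_contra hne
    exact hA (hdisj σ hσ ρ hρ hne ▸ ⟨hAσ, hAρ⟩)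
  -- subbasic sets are open
  have hplus : ∀ A : Set X, IsOpen[t] {x : Set (Set X) | A ∈ x} := fun A =>
    TopologicalSpace.GenerateOpen.basic _ (Or.inl ⟨A, rfl⟩)
  have hminus : ∀ A : Set X, IsOpen[t] {x : Set (Set X) | A ∉ x} := fun A =>
    TopologicalSpace.GenerateOpen.basic _ (Or.inr ⟨A, rfl⟩)
  -- the cube is Hausdorff
  haveI : T2Space (Set (Set X)) := by
    constructor
    intro x y hxy
    have : ∃ A : Set X, ¬(A ∈ x ↔ A ∈ y) := by
      by_contra h
      push_neg at h
      exact hxy (Set.ext fun A => h A)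
    obtain ⟨A, hA⟩ := this
    by_cases hAx : A ∈ x
    · exact ⟨{z | A ∈ z}, {z | A ∉ z}, hplus A, hminus A, hAx,
        fun h => hA ⟨fun _ => h, fun _ => hAx⟩,
        Set.disjoint_left.2 fun z hz hz' => hz' hz⟩
    · refine ⟨{z | A ∉ z}, {z | A ∈ z}, hminus A, hplus A, hAx, ?_,
        Set.disjoint_left.2 fun z hz hz' => hz hz'⟩
      by_contra hAy
      exact hA ⟨fun h => absurd h hAx, fun h => absurd h hAy⟩
  -- the key tendsto statement
  haveI : Infinite ↥T := hT.to_subtype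
  have htend : Filter.Tendsto (fun τ : ↥T => (τ : Set (Set X))) Filter.cofinite (𝓝 I) := by
    rw [show t = TopologicalSpace.generateFrom _ from rfl] at *
    refine TopologicalSpace.tendsto_nhds_generateFrom_iff.2 ?_
    rintro s (⟨A, rfl⟩ | ⟨A, rfl⟩) hIs
    · exact Filter.mem_of_superset Filter.univ_mem
        (fun τ _ => hsub τ τ.2 hIs)
    · refine Filter.mem_cofinite.2 ?_
      have : {τ : ↥T | A ∈ (τ : Set (Set X))}.Subsingleton := by
        intro σ hσ ρ hρ
        exact Subtype.ext (huniq A hIs σ σ.2 ρ ρ.2 hσ hρ)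
      have hfin := this.finite
      convert hfin using 1
      ext τ
      simp
  -- closure computation
  have hclo : closure T = T ∪ {I} := by
    apply Set.Subset.antisymm
    · intro x hx
      by_contra hx'
      have hxT : x ∉ T := fun h => hx' (Or.inl h)
      have hxI : x ≠ I := fun h => hx' (Or.inr h)
      by_cases hcase : ∃ A ∈ x, A ∉ I
      · obtain ⟨A, hAx, hAI⟩ := hcase
        by_cases hex : ∃ τ₀ ∈ T, A ∈ τ₀
        · obtain ⟨τ₀, hτ₀T, hAτ₀⟩ := hex
          have hxτ₀ : x ≠ τ₀ := fun h => hxT (h ▸ hτ₀T)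
          have : ∃ B : Set X, ¬(B ∈ x ↔ B ∈ τ₀) := by
            by_contra h
            push_neg at h
            exact hxτ₀ (Set.ext fun B => h B)
          obtain ⟨B, hB⟩ := this
          by_cases hBx : B ∈ x
          · have hBτ₀ : B ∉ τ₀ := fun h => hB ⟨fun _ => h, fun _ => hBx⟩
            have hopen : IsOpen[t] ({z | A ∈ z} ∩ {z | B ∈ z}) := (hplus A).inter (hplus B)
            obtain ⟨τ, ⟨⟨hAτ, hBτ⟩, hτT⟩⟩ :=
              (mem_closure_iff.1 hx) _ hopen ⟨hAx, hBx⟩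
            exact hBτ₀ (huniq A hAI τ hτT τ₀ hτ₀T hAτ hAτ₀ ▸ hBτ)
          · have hBτ₀ : B ∈ τ₀ := by
              by_contra hBτ₀
              exact hB ⟨fun h => absurd h hBx, fun h => absurd h hBτ₀⟩
            have hopen : IsOpen[t] ({z | A ∈ z} ∩ {z | B ∉ z}) := (hplus A).inter (hminus B)
            obtain ⟨τ, ⟨⟨hAτ, hBτ⟩, hτT⟩⟩ :=
              (mem_closure_iff.1 hx) _ hopen ⟨hAx, hBx⟩
            exact hBτ (huniq A hAI τ hτT τ₀ hτ₀T hAτ hAτ₀ ▸ hBτ₀)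
        · obtain ⟨τ, ⟨hAτ, hτT⟩⟩ := (mem_closure_iff.1 hx) _ (hplus A) hAx
          exact hex ⟨τ, hτT, hAτ⟩
      · push_neg at hcase
        have hssub : x ⊆ I := hcase
        have : ∃ A ∈ I, A ∉ x := by
          by_contra h
          push_neg at h
          exact hxI (Set.Subset.antisymm hssub h)
        obtain ⟨A, hAI, hAx⟩ := this
        obtain ⟨τ, ⟨hAτ, hτT⟩⟩ := (mem_closure_iff.1 hx) _ (hminus A) hAx
        exact hAτ (hsub τ hτT hAI)
    · rintro x (hx | hx)
      · exact subset_closure hx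
      · rw [hx]
        exact mem_closure_of_tendsto htend
          (Filter.Eventually.of_forall fun τ => τ.2)
  refine ⟨hclo, ?_⟩
  -- the homeomorphism
  letI tT : TopologicalSpace ↥T := ⊥
  haveI : DiscreteTopology ↥T := ⟨rfl⟩
  have hmemI : I ∈ T ∪ {I} := Or.inr rfl
  let e : OnePoint ↥T ≃ ↥(T ∪ {I}) :=
  { toFun := fun p => Option.elim p ⟨I, hmemI⟩ (fun τ => ⟨↑τ, Or.inl τ.2⟩)
    invFun := fun x => if h : (x : Set (Set X)) ∈ T then ((⟨x, h⟩ : ↥T) : OnePoint ↥T)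
      else OnePoint.infty
    left_inv := by
      rintro (_ | τ)
      · exact dif_neg hInotT
      · exact dif_pos τ.2
    right_inv := by
      rintro ⟨x, hx⟩
      by_cases h : x ∈ T
      · simp only [dif_pos h]
        rfl
      · simp only [dif_neg h]
        have : x = I := hx.resolve_left h
        exact Subtype.ext this.symm }
  have hecont : Continuous e := by
    rw [OnePoint.continuous_iff_from_discrete]
    have : Filter.Tendsto (fun τ : ↥T => ((e τ : ↥(T ∪ {I})) : Set (Set X)))
        Filter.cofinite (𝓝 I) := htend
    rw [show (e OnePoint.infty : ↥(T ∪ {I})) = ⟨I, hmemI⟩ from rfl]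
    rw [nhds_induced]
    exact Filter.tendsto_comap_iff.2 this
  refine ⟨hecont.homeoOfEquivCompactToT2, fun τ => rfl, rfl⟩
end

section
/- Let X be an infinite set and let Y be any infinite set with |Y| ≤ 2^{|X|}. Then Top(X), with its subspace topology from 2^{P(X)}, contains a homeomorphic copy of the one-point compactification of the discrete space Y; that is, there is a topological embedding of OnePoint(Y) (Y taken with the discrete topology) into the subspace Top(X) of 2^{P(X)}. -/
universe u

open Set OnePoint

lemma isTopologyOn_aux {X : Type*} (s : Set (Set X)) (hs : s.Subsingleton) :
    IsTopologyOn (({∅, Set.univ} ∪ s) : Set (Set X)) := by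
  refine ⟨Or.inl (Or.inl rfl), Or.inl (Or.inr rfl), ?_, ?_⟩
  · rintro a (ha | ha) b (hb | hb)
    · rcases ha with rfl | rfl <;> rcases hb with rfl | rfl <;> simp
    · rcases ha with rfl | rfl
      · exact Or.inl (Or.inl (by simp))
      · simpa using Or.inr hb
    · rcases hb with rfl | rfl
      · exact Or.inl (Or.inl (by simp))
      · simpa using Or.inr ha
    · rw [hs ha hb, inter_self]; exact Or.inr hb
  · intro S hS
    by_cases hu : Set.univ ∈ S
    · have : ⋃₀ S = Set.univ := univ_subset_iff.mp (subset_sUnion_of_mem hu)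
      rw [this]; exact Or.inl (Or.inr rfl)
    by_cases ha : ∃ a ∈ S, a ∈ s
    · obtain ⟨a, haS, has⟩ := ha
      have : ⋃₀ S = a := by
        apply subset_antisymm
        · intro x hx
          obtain ⟨b, hbS, hxb⟩ := hx
          rcases hS hbS with (rfl | rfl) | hb
          · exact absurd hxb (notMem_empty x)
          · exact absurd hbS hu
          · rwa [hs hb has] at hxb
        · exact subset_sUnion_of_mem haS
      rw [this]; exact Or.inr has
    · have : ⋃₀ S = ∅ := by
        apply eq_empty_of_subset_empty
        intro x hx
        obtain ⟨b, hbS, hxb⟩ := hx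
        rcases hS hbS with (rfl | rfl) | hb
        · exact hxb
        · exact absurd hbS hu
        · exact absurd ⟨b, hbS, hb⟩ ha
      rw [this]; exact Or.inl (Or.inl rfl)

theorem stmt14 {X Y : Type u} [Infinite X] [Infinite Y]
    (hcard : Cardinal.mk Y ≤ 2 ^ Cardinal.mk X) :
    ∃ f : OnePoint Y → ↥{τ : Set (Set X) | IsTopologyOn τ},
      @Topology.IsEmbedding _ _ (onePointDiscreteTop Y)
        (TopologicalSpace.induced Subtype.val (cantorTop X)) f := by
  classical
  haveI : Infinite (Set X) := Infinite.of_injective (fun a => ({a} : Set X))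
    (fun a b h => by simpa using h)
  -- get an injection of Y into proper nonempty subsets of X
  have h1 : Cardinal.mk Y ≤ Cardinal.mk ↥(({∅, Set.univ} : Set (Set X))ᶜ) := by
    rw [Cardinal.mk_compl_of_infinite]
    · rw [Cardinal.mk_set]; exact hcard
    · exact lt_of_lt_of_le (((Set.finite_singleton _).insert _).lt_aleph0)
        (Cardinal.aleph0_le_mk _)
  obtain ⟨e⟩ := (Cardinal.le_def _ _).mp h1
  set g : Y → Set X := fun y => (e y).1 with hg
  have ginj : Function.Injective g := fun a b h => e.injective (Subtype.ext h)
  have gne : ∀ y, g y ≠ ∅ ∧ g y ≠ Set.univ := by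
    intro y
    have := (e y).2
    simp only [mem_compl_iff, mem_insert_iff, mem_singleton_iff, not_or] at this
    exact this
  -- the map
  set F : OnePoint Y → Set (Set X) :=
    fun p => ({∅, Set.univ} : Set (Set X)) ∪ {A | ∃ y : Y, (y : OnePoint Y) = p ∧ g y = A}
    with hF
  have hFtop : ∀ p, IsTopologyOn (F p) := by
    intro p
    apply isTopologyOn_aux
    rintro a ⟨y, hy, rfl⟩ b ⟨y', hy', rfl⟩
    exact congrArg g (Option.some_injective _ (hy.trans hy'.symm))
  have memF : ∀ (p) (A : Set X), A ∈ F p ↔ (A = ∅ ∨ A = Set.univ) ∨ ∃ y : Y, (y : OnePoint Y) = p ∧ g y = A := by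
    intro p A
    simp [hF, mem_union, mem_insert_iff]
  have memg : ∀ (p) (y : Y), g y ∈ F p ↔ (y : OnePoint Y) = p := by
    intro p y
    rw [memF]
    constructor
    · rintro ((h | h) | ⟨y', hy', hgy⟩)
      · exact absurd h (gne y).1
      · exact absurd h (gne y).2
      · rwa [← ginj hgy]
    · intro h; exact Or.inr ⟨y, h, rfl⟩
  have Finj : Function.Injective F := by
    intro p q h
    rcases p with _ | y <;> rcases q with _ | y'
    · rfl
    · have : g y' ∈ F (Option.some y') := (memg _ y').mpr rfl
      rw [← h] at this; replace this := (memg _ _).mp this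
      exact absurd this (OnePoint.coe_ne_infty y')
    · have : g y ∈ F (Option.some y) := (memg _ y).mpr rfl
      rw [h] at this; replace this := (memg _ _).mp this
      exact absurd this (OnePoint.coe_ne_infty y)
    · have : g y ∈ F (Option.some y) := (memg _ y).mpr rfl
      rw [h] at this; replace this := (memg _ _).mp this
      exact congrArg Option.some (Option.some_injective _ this)
  refine ⟨fun p => ⟨F p, hFtop p⟩,
    @Topology.IsEmbedding.mk _ _ (onePointDiscreteTop Y)
      (TopologicalSpace.induced Subtype.val (cantorTop X)) _
      (@Topology.IsInducing.mk _ _ (onePointDiscreteTop Y)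
        (TopologicalSpace.induced Subtype.val (cantorTop X)) _ ?_)
      (fun p q h => Finj (congrArg Subtype.val h))⟩
  rw [induced_compose]
  show _ = TopologicalSpace.induced F (cantorTop X)
  letI : TopologicalSpace Y := ⊥
  haveI : DiscreteTopology Y := ⟨rfl⟩
  letI : TopologicalSpace (Set (Set X)) := cantorTop X
  have hrfl : onePointDiscreteTop Y = (inferInstance : TopologicalSpace (OnePoint Y)) := rfl
  rw [hrfl]
  apply le_antisymm
  · -- continuity of F
    rw [← continuous_iff_le_induced]
    rw [cantorTop]
    apply continuous_generateFrom_iff.mpr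
    rintro s (⟨A, rfl⟩ | ⟨A, rfl⟩)
    · by_cases hA : A = ∅ ∨ A = Set.univ
      · have : F ⁻¹' {x | A ∈ x} = Set.univ := by
          ext p; simp only [mem_preimage, mem_setOf_eq, mem_univ, iff_true, memF]
          exact Or.inl hA
        rw [this]; exact isOpen_univ
      · have : F ⁻¹' {x | A ∈ x} = {p | ∃ y : Y, (y : OnePoint Y) = p ∧ g y = A} := by
          ext p; simp only [mem_preimage, mem_setOf_eq, memF, hA, false_or]
        rw [this]
        rw [OnePoint.isOpen_iff_of_notMem]
        · exact isOpen_discrete _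
        · rintro ⟨y, hy, -⟩
          exact OnePoint.coe_ne_infty y hy
    · by_cases hA : A = ∅ ∨ A = Set.univ
      · have : F ⁻¹' {x | A ∉ x} = ∅ := by
          ext p; simp only [mem_preimage, mem_setOf_eq, mem_empty_iff_false, iff_false, not_not,
            memF]
          exact Or.inl hA
        rw [this]; exact isOpen_empty
      · rw [OnePoint.isOpen_iff_of_mem]
        · constructor
          · exact (isClosed_discrete _)
          · apply Set.Finite.isCompact
            have : ((fun y : Y => (y : OnePoint Y)) ⁻¹' (F ⁻¹' {x | A ∉ x}))ᶜ ⊆ {y | g y = A} := by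
              intro y hy
              simp only [mem_compl_iff, mem_preimage, mem_setOf_eq, not_not] at hy
              rcases (memF _ A).mp hy with (h | ⟨y', hy', rfl⟩)
              · exact absurd h hA
              · simp only [mem_setOf_eq]
                exact (congrArg g (Option.some_injective _ hy')).symm
            apply Set.Finite.subset _ this
            apply Set.Subsingleton.finite
            intro a ha b hb
            exact ginj (ha.trans hb.symm)
        · simp only [mem_preimage, mem_setOf_eq, memF]
          rintro ((h | h) | ⟨y, hy, -⟩)
          · exact hA (Or.inl h)
          · exact hA (Or.inr h)
          · exact OnePoint.coe_ne_infty y hy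
  · -- every open of OnePoint is induced-open
    intro s hs
    rw [isOpen_induced_iff]
    by_cases hinf : (∞ : OnePoint Y) ∈ s
    · have hK : ((fun y : Y => (y : OnePoint Y)) ⁻¹' s)ᶜ.Finite := by
        have := (OnePoint.isOpen_iff_of_mem' hinf).mp hs
        exact this.1.finite_of_discrete
      refine ⟨(⋂ y ∈ ((fun y : Y => (y : OnePoint Y)) ⁻¹' s)ᶜ, {x : Set (Set X) | g y ∉ x}), ?_, ?_⟩
      · apply hK.isOpen_biInter
        intro y _
        exact TopologicalSpace.GenerateOpen.basic _ (Or.inr ⟨g y, rfl⟩)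
      · ext p
        simp only [mem_preimage, mem_iInter, mem_compl_iff, mem_setOf_eq]
        constructor
        · intro h
          rcases p with _ | y'
          · exact hinf
          · by_contra hns
            exact h y' hns ((memg _ y').mpr rfl)
        · intro hp y hy hgy
          rw [memg] at hgy
          rw [hgy] at hy
          exact hy hp
    · refine ⟨(⋃ y ∈ ((fun y : Y => (y : OnePoint Y)) ⁻¹' s), {x : Set (Set X) | g y ∈ x}), ?_, ?_⟩
      · apply isOpen_biUnion
        intro y _
        exact TopologicalSpace.GenerateOpen.basic _ (Or.inl ⟨g y, rfl⟩)
      · ext p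
        simp only [mem_preimage, mem_iUnion, mem_setOf_eq]
        constructor
        · rintro ⟨y, hy, hgy⟩
          rw [memg] at hgy
          rwa [← hgy]
        · intro hp
          rcases p with _ | y'
          · exact absurd hp hinf
          · exact ⟨y', hp, (memg _ y').mpr rfl⟩
end

section
/- Let n ∈ ℕ. Then TYPE[n] = { P(ℕ ∖ {n}) ∪ F : F is an ultrafilter on ℕ with {n} ∉ F }, equipped with the subspace topology from 2^{P(ℕ)}, is homeomorphic to the Stone–Čech compactification βℕ of the discrete space ℕ, i.e., to the space of all ultrafilters on ℕ with the Stone topology (whose basic open sets are {F : A ∈ F} for A ⊆ ℕ). -/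
/-- `TYPE[n]`: the set of ultratopologies on `ℕ` associated with the point `n`, i.e. the
families of the form `𝒫(ℕ \ {n}) ∪ F` where `F` is an ultrafilter on `ℕ` with `{n} ∉ F`. -/
def TYPEb (n : ℕ) : Set (Set (Set ℕ)) :=
  {T | ∃ F : Ultrafilter ℕ, ({n} : Set ℕ) ∉ F ∧
    T = {A : Set ℕ | A ⊆ ({n} : Set ℕ)ᶜ} ∪ {A : Set ℕ | A ∈ F}}

namespace Stmt17Aux

/-- An injection `ℕ → ℕ` with range `{n}ᶜ`. -/
def emb (n : ℕ) : ℕ → ℕ := fun k => if k < n then k else k + 1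

lemma emb_inj (n : ℕ) : Function.Injective (emb n) := by
  intro a b h
  unfold emb at h
  split_ifs at h <;> omega

lemma emb_range (n : ℕ) : Set.range (emb n) = ({n} : Set ℕ)ᶜ := by
  ext m
  simp only [Set.mem_range, Set.mem_compl_iff, Set.mem_singleton_iff]
  constructor
  · rintro ⟨k, rfl⟩; unfold emb; split_ifs <;> omega
  · intro h
    rcases Nat.lt_or_ge m n with h' | h'
    · exact ⟨m, if_pos h'⟩
    · exact ⟨m - 1, by unfold emb; split_ifs <;> omega⟩

lemma compl_mem (n : ℕ) (F : Ultrafilter ℕ) (hF : ({n} : Set ℕ) ∉ F) :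
    ({n} : Set ℕ)ᶜ ∈ F := Ultrafilter.compl_mem_iff_notMem.2 hF

/-- For `B ⊆ {n}ᶜ`, `B ∪ {n} ∈ F ↔ B ∈ F` when `{n} ∉ F`. -/
lemma key (n : ℕ) (F : Ultrafilter ℕ) (hF : ({n} : Set ℕ) ∉ F) {B : Set ℕ}
    (hB : B ⊆ ({n} : Set ℕ)ᶜ) : B ∪ {n} ∈ F ↔ B ∈ F := by
  constructor
  · intro h
    have h2 := Filter.inter_mem h (compl_mem n F hF)
    have heq : (B ∪ {n}) ∩ ({n} : Set ℕ)ᶜ = B := by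
      ext x
      constructor
      · rintro ⟨hx | hx, hx'⟩
        · exact hx
        · exact absurd hx hx'
      · intro hx; exact ⟨Or.inl hx, hB hx⟩
    rwa [heq] at h2
  · intro h; exact Filter.mem_of_superset h Set.subset_union_left

lemma mem_TYPEb_iff (n : ℕ) (T : Set (Set ℕ)) :
    T ∈ TYPEb n ↔ ∃ F : Ultrafilter ℕ, ({n} : Set ℕ) ∉ F ∧
      T = {A : Set ℕ | A ⊆ ({n} : Set ℕ)ᶜ} ∪ {A : Set ℕ | A ∈ F} := Iff.rfl

lemma large (n : ℕ) (F : Ultrafilter ℕ) (hF : ({n} : Set ℕ) ∉ F) :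
    Set.range (emb n) ∈ F := by rw [emb_range]; exact compl_mem n F hF

/-- The forward map: extract the ultrafilter and pull it back along `emb n`. -/
noncomputable def fwd (n : ℕ) (T : ↥(TYPEb n)) : Ultrafilter ℕ :=
  Ultrafilter.comap ((mem_TYPEb_iff n T.1).1 T.2).choose (emb_inj n)
    (large n _ ((mem_TYPEb_iff n T.1).1 T.2).choose_spec.1)

lemma mem_fwd (n : ℕ) (T : ↥(TYPEb n)) (s : Set ℕ) :
    s ∈ fwd n T ↔ (emb n '' s ∪ {n}) ∈ T.1 := by
  set F := ((mem_TYPEb_iff n T.1).1 T.2).choose with hFdef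
  obtain ⟨hF, hT⟩ := ((mem_TYPEb_iff n T.1).1 T.2).choose_spec
  have himg : emb n '' s ⊆ ({n} : Set ℕ)ᶜ := by
    rw [← emb_range n]; exact Set.image_subset_range _ _
  rw [fwd, Ultrafilter.mem_comap]
  rw [← hFdef, show T.1 = _ from hT]
  have hnot : ¬ (emb n '' s ∪ {n} ⊆ ({n} : Set ℕ)ᶜ) := by
    intro h
    exact h (Set.mem_union_right _ rfl) rfl
  constructor
  · intro h
    exact Or.inr ((key n F hF himg).2 h)
  · rintro (h | h)
    · exact absurd h hnot
    · exact (key n F hF himg).1 h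

def bwdF (n : ℕ) (G : Ultrafilter ℕ) : Ultrafilter ℕ := Ultrafilter.map (emb n) G

lemma preimage_singleton (n : ℕ) : emb n ⁻¹' ({n} : Set ℕ) = ∅ := by
  ext k
  simp only [Set.mem_preimage, Set.mem_singleton_iff, Set.mem_empty_iff_false, iff_false]
  intro h
  unfold emb at h
  split_ifs at h <;> omega

lemma singleton_notMem_bwdF (n : ℕ) (G : Ultrafilter ℕ) : ({n} : Set ℕ) ∉ bwdF n G := by
  intro h
  rw [bwdF, Ultrafilter.mem_map, preimage_singleton] at h
  exact Ultrafilter.empty_notMem h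

lemma mem_bwdF (n : ℕ) (G : Ultrafilter ℕ) (s : Set ℕ) :
    s ∈ bwdF n G ↔ emb n ⁻¹' s ∈ G := Ultrafilter.mem_map

/-- The backward map. -/
def bwd (n : ℕ) (G : Ultrafilter ℕ) : ↥(TYPEb n) :=
  ⟨{A : Set ℕ | A ⊆ ({n} : Set ℕ)ᶜ} ∪ {A : Set ℕ | A ∈ bwdF n G},
   ⟨bwdF n G, singleton_notMem_bwdF n G, rfl⟩⟩

lemma bwdF_fwd (n : ℕ) (T : ↥(TYPEb n)) :
    bwdF n (fwd n T) = ((mem_TYPEb_iff n T.1).1 T.2).choose := by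
  set F := ((mem_TYPEb_iff n T.1).1 T.2).choose with hFdef
  have hF := ((mem_TYPEb_iff n T.1).1 T.2).choose_spec.1
  apply Ultrafilter.coe_injective
  ext s
  rw [show (bwdF n (fwd n T) : Filter ℕ) = (bwdF n (fwd n T) : Ultrafilter ℕ) from rfl]
  rw [Ultrafilter.mem_coe, Ultrafilter.mem_coe, mem_bwdF, fwd, Ultrafilter.mem_comap, ← hFdef]
  rw [Set.image_preimage_eq_inter_range, emb_range]
  constructor
  · intro h; exact Filter.mem_of_superset h Set.inter_subset_left
  · intro h; exact Filter.inter_mem h (compl_mem n F hF)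

lemma left_inv (n : ℕ) (T : ↥(TYPEb n)) : bwd n (fwd n T) = T := by
  apply Subtype.ext
  show _ ∪ _ = T.1
  rw [bwdF_fwd n T]
  exact (((mem_TYPEb_iff n T.1).1 T.2).choose_spec.2).symm

lemma right_inv (n : ℕ) (G : Ultrafilter ℕ) : fwd n (bwd n G) = G := by
  apply Ultrafilter.coe_injective
  ext s
  rw [Ultrafilter.mem_coe, Ultrafilter.mem_coe, mem_fwd]
  show emb n '' s ∪ {n} ∈ ({A : Set ℕ | A ⊆ ({n} : Set ℕ)ᶜ} ∪ {A : Set ℕ | A ∈ bwdF n G}) ↔ _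
  have hnot : ¬ (emb n '' s ∪ {n} ⊆ ({n} : Set ℕ)ᶜ) := fun h =>
    h (Set.mem_union_right _ rfl) rfl
  have hpre : emb n ⁻¹' (emb n '' s ∪ {n}) = s := by
    rw [Set.preimage_union, preimage_singleton, Set.union_empty,
      Set.preimage_image_eq _ (emb_inj n)]
  constructor
  · rintro (h | h)
    · exact absurd h hnot
    · have h' : emb n '' s ∪ {n} ∈ bwdF n G := h
      rw [mem_bwdF, hpre] at h'; exact h'
  · intro h
    exact Or.inr (show emb n '' s ∪ {n} ∈ bwdF n G from
      (mem_bwdF n G _).2 (by rw [hpre]; exact h))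

end Stmt17Aux

open Stmt17Aux in
/-- `TYPE[n]` with the subspace topology from `2^{𝒫(ℕ)}` is homeomorphic to `βℕ`,
the space of all ultrafilters on `ℕ` with the Stone topology. -/
theorem stmt17 (n : ℕ) :
    Nonempty (@Homeomorph (↥(TYPEb n)) (Ultrafilter ℕ)
      (TopologicalSpace.induced Subtype.val (cantorTop ℕ))
      Ultrafilter.topologicalSpace) := by
  letI tC : TopologicalSpace (Set (Set ℕ)) := cantorTop ℕ
  letI tS : TopologicalSpace (↥(TYPEb n)) := TopologicalSpace.induced Subtype.val (cantorTop ℕ)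
  refine ⟨{ toFun := fwd n, invFun := bwd n,
            left_inv := left_inv n, right_inv := right_inv n,
            continuous_toFun := ?_, continuous_invFun := ?_ }⟩
  · -- continuity of fwd
    apply continuous_generateFrom_iff.mpr
    rintro U ⟨s, rfl⟩
    have hpre : fwd n ⁻¹' {u : Ultrafilter ℕ | s ∈ u} =
        Subtype.val ⁻¹' {x : Set (Set ℕ) | (emb n '' s ∪ {n}) ∈ x} := by
      ext T
      simp only [Set.mem_preimage, Set.mem_setOf_eq]
      exact mem_fwd n T s
    rw [hpre]
    exact isOpen_induced (TopologicalSpace.GenerateOpen.basic _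
      (Or.inl ⟨emb n '' s ∪ {n}, rfl⟩))
  · -- continuity of bwd
    apply continuous_induced_rng.2
    apply continuous_generateFrom_iff.mpr
    rintro U (⟨A, rfl⟩ | ⟨A, rfl⟩)
    · by_cases h : A ⊆ ({n} : Set ℕ)ᶜ
      · have : (Subtype.val ∘ bwd n) ⁻¹' {x : Set (Set ℕ) | A ∈ x} = Set.univ := by
          ext G
          simp only [Set.mem_preimage, Function.comp_apply, Set.mem_univ, iff_true]
          exact Or.inl h
        rw [this]; exact isOpen_univ
      · have : (Subtype.val ∘ bwd n) ⁻¹' {x : Set (Set ℕ) | A ∈ x} =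
            {G : Ultrafilter ℕ | emb n ⁻¹' A ∈ G} := by
          ext G
          simp only [Set.mem_preimage, Function.comp_apply, Set.mem_setOf_eq]
          constructor
          · rintro (h' | h')
            · exact absurd h' h
            · exact (mem_bwdF n G A).1 h'
          · intro h'; exact Or.inr ((mem_bwdF n G A).2 h')
        rw [this]; exact ultrafilter_isOpen_basic _
    · by_cases h : A ⊆ ({n} : Set ℕ)ᶜ
      · have : (Subtype.val ∘ bwd n) ⁻¹' {x : Set (Set ℕ) | A ∉ x} = ∅ := by
          ext G
          simp only [Set.mem_preimage, Function.comp_apply, Set.mem_setOf_eq,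
            Set.mem_empty_iff_false, iff_false, not_not]
          exact Or.inl h
        rw [this]; exact isOpen_empty
      · have : (Subtype.val ∘ bwd n) ⁻¹' {x : Set (Set ℕ) | A ∉ x} =
            {G : Ultrafilter ℕ | (emb n ⁻¹' A)ᶜ ∈ G} := by
          ext G
          simp only [Set.mem_preimage, Function.comp_apply, Set.mem_setOf_eq]
          rw [Ultrafilter.compl_mem_iff_notMem]
          constructor
          · intro h'
            intro hmem
            rw [← mem_bwdF n G A] at hmem
            exact h' (Or.inr hmem)
          · intro h'
            rintro (h'' | h'')
            · exact h h''
            · exact h' ((mem_bwdF n G A).1 h'')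
        rw [this]; exact ultrafilter_isOpen_basic _
end
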